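/- arXiv:1604.05060 — 12 statements merged into one kernel-verified Lean document; each statement's English description precedes it below -/
import Mathlib

section
/- Let p, q be unit quaternions and let Z = (U, V) be a pair of quaternions with Re(p⁻¹U) = 0 and Re(q⁻¹V) = 0. Then J(J(Z)) = −Z, where J(U,V) = (1/√3)·(2pq⁻¹V − U, −2qp⁻¹U + V); that is, J is an almost complex structure on S³×S³. -/
open Quaternion

noncomputable section

/-- Euclidean inner product on ℍ ≅ ℝ⁴: ⟨a,b⟩ = Re(a · conj b). -/
def innQ (a b : ℍ[ℝ]) : ℝ := (a * star b).re

/-- Euclidean product inner product on ℍ × ℍ. -/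
def innP (Z Z' : ℍ[ℝ] × ℍ[ℝ]) : ℝ := innQ Z.1 Z'.1 + innQ Z.2 Z'.2

/-- Tangency to S³ × S³ at (p,q). -/
def Tangent (p q : ℍ[ℝ]) (Z : ℍ[ℝ] × ℍ[ℝ]) : Prop :=
  (p⁻¹ * Z.1).re = 0 ∧ (q⁻¹ * Z.2).re = 0

/-- The almost complex structure J of the nearly Kähler S³×S³ at the point (p,q). -/
def Jmap (p q : ℍ[ℝ]) (Z : ℍ[ℝ] × ℍ[ℝ]) : ℍ[ℝ] × ℍ[ℝ] :=
  (Real.sqrt 3)⁻¹ •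
    ((2 * (p * q⁻¹ * Z.2) - Z.1, -(2 * (q * p⁻¹ * Z.1)) + Z.2) : ℍ[ℝ] × ℍ[ℝ])

/-- The nearly Kähler metric g at the point (p,q). -/
def gmet (p q : ℍ[ℝ]) (Z Z' : ℍ[ℝ] × ℍ[ℝ]) : ℝ :=
  (4/3) * (innQ Z.1 Z'.1 + innQ Z.2 Z'.2)
    - (2/3) * (innQ (p⁻¹ * Z.1) (q⁻¹ * Z'.2) + innQ (p⁻¹ * Z'.1) (q⁻¹ * Z.2))

/-- The almost product structure P at the point (p,q). -/
def Pmap (p q : ℍ[ℝ]) (Z : ℍ[ℝ] × ℍ[ℝ]) : ℍ[ℝ] × ℍ[ℝ] :=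
  (p * q⁻¹ * Z.2, q * p⁻¹ * Z.1)

/-- The usual product structure Q. -/
def Qmap (Z : ℍ[ℝ] × ℍ[ℝ]) : ℍ[ℝ] × ℍ[ℝ] := (-Z.1, Z.2)

/-- The quaternion units i, j, k. -/
def qi : ℍ[ℝ] := ⟨0, 1, 0, 0⟩
def qj : ℍ[ℝ] := ⟨0, 0, 1, 0⟩
def qk : ℍ[ℝ] := ⟨0, 0, 0, 1⟩

set_option maxHeartbeats 1000000 in
/-- J ∘ J = -id on tangent vectors, so J is an almost complex structure. -/
theorem stmt_1 (p q U V : ℍ[ℝ]) (hp : ‖p‖ = 1) (hq : ‖q‖ = 1)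
    (hU : (p⁻¹ * U).re = 0) (hV : (q⁻¹ * V).re = 0) :
    Jmap p q (Jmap p q (U, V)) = -((U, V) : ℍ[ℝ] × ℍ[ℝ]) := by
  have hp0 : p ≠ 0 := by intro h; rw [h] at hp; simp at hp
  have hq0 : q ≠ 0 := by intro h; rw [h] at hq; simp at hq
  have key1 : p * (q⁻¹ * (q * (p⁻¹ * U))) = U := by
    rw [← mul_assoc q⁻¹ q, inv_mul_cancel₀ hq0, one_mul, ← mul_assoc,
      mul_inv_cancel₀ hp0, one_mul]
  have key2 : q * (p⁻¹ * (p * (q⁻¹ * V))) = V := by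
    rw [← mul_assoc p⁻¹ p, inv_mul_cancel₀ hp0, one_mul, ← mul_assoc,
      mul_inv_cancel₀ hq0, one_mul]
  have hs : (Real.sqrt 3)⁻¹ * (Real.sqrt 3)⁻¹ = 1/3 := by
    rw [← mul_inv, ← Real.sqrt_mul_self (by norm_num : (0:ℝ) ≤ 3)]
    norm_num
  simp only [Jmap, Prod.smul_mk, Prod.mk.injEq, Prod.neg_mk, mul_assoc,
    mul_add, mul_sub, mul_neg, neg_add, neg_sub, neg_neg, mul_smul_comm,
    smul_sub, smul_add, smul_neg, smul_smul, hs, key1, key2]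
  have key1' : p * (q⁻¹ * (2 * (q * (p⁻¹ * U)))) = 2 * U := by
    rw [show p * (q⁻¹ * (2 * (q * (p⁻¹ * U)))) =
        2 * (p * (q⁻¹ * (q * (p⁻¹ * U)))) by noncomm_ring, key1]
  have key2' : q * (p⁻¹ * (2 * (p * (q⁻¹ * V)))) = 2 * V := by
    rw [show q * (p⁻¹ * (2 * (p * (q⁻¹ * V)))) =
        2 * (q * (p⁻¹ * (p * (q⁻¹ * V)))) by noncomm_ring, key2]
  rw [key1', key2']
  simp only [two_mul]
  constructor <;> (match_scalars <;> norm_num)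
end
end

section
/- Let p, q be unit quaternions, and let Z = (U,V) and Z' = (U',V') be tangent vectors to S³×S³ at (p,q). Then (1/2)·(⟨Z,Z'⟩ + ⟨JZ, JZ'⟩) = (4/3)·(⟨U,U'⟩ + ⟨V,V'⟩) − (2/3)·(⟨p⁻¹U, q⁻¹V'⟩ + ⟨p⁻¹U', q⁻¹V⟩), where ⟨Z,Z'⟩ = ⟨U,U'⟩ + ⟨V,V'⟩ is the Euclidean product inner product. In other words, the Hermitian metric associated to the Euclidean product metric on S³×S³ is given by the explicit formula on the right-hand side. -/
open Quaternion

noncomputable section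

/- ## Auxiliary lemmas -/

lemma re_mul_comm (a b : ℍ[ℝ]) : (a*b).re = (b*a).re := by
  simp [Quaternion.re_mul]; ring

lemma innQ_mul_left (a x y : ℍ[ℝ]) : innQ (a*x) y = innQ x (star a * y) := by
  unfold innQ
  rw [star_mul, star_star, mul_assoc, re_mul_comm, ← mul_assoc]

lemma innQ_comm (a b : ℍ[ℝ]) : innQ a b = innQ b a := by
  unfold innQ; rw [re_mul_comm]; simp [← star_mul]

lemma innQ_mul_right (a x y : ℍ[ℝ]) : innQ x (a*y) = innQ (star a * x) y := by
  rw [innQ_comm, innQ_mul_left, innQ_comm]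

lemma innQ_add_left (a b c : ℍ[ℝ]) : innQ (a+b) c = innQ a c + innQ b c := by
  simp [innQ, add_mul]

lemma innQ_add_right (a b c : ℍ[ℝ]) : innQ a (b+c) = innQ a b + innQ a c := by
  simp [innQ, mul_add]

lemma innQ_sub_left (a b c : ℍ[ℝ]) : innQ (a-b) c = innQ a c - innQ b c := by
  simp [innQ, sub_mul]

lemma innQ_sub_right (a b c : ℍ[ℝ]) : innQ a (b-c) = innQ a b - innQ a c := by
  simp [innQ, mul_sub]

lemma innQ_neg_left (a c : ℍ[ℝ]) : innQ (-a) c = - innQ a c := by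
  simp [innQ]

lemma innQ_neg_right (a c : ℍ[ℝ]) : innQ a (-c) = - innQ a c := by
  simp [innQ]

lemma innQ_two_left (a c : ℍ[ℝ]) : innQ (2*a) c = 2 * innQ a c := by
  rw [two_mul, innQ_add_left]; ring

lemma innQ_two_right (a c : ℍ[ℝ]) : innQ a (2*c) = 2 * innQ a c := by
  rw [two_mul, innQ_add_right]; ring

lemma innQ_smul3 (a c : ℍ[ℝ]) :
    innQ ((Real.sqrt 3)⁻¹ • a) ((Real.sqrt 3)⁻¹ • c) = (1/3) * innQ a c := by
  unfold innQ
  rw [Quaternion.star_smul, smul_mul_assoc, mul_smul_comm, smul_smul]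
  have h : (Real.sqrt 3)⁻¹ * (Real.sqrt 3)⁻¹ = 1/3 := by
    rw [← mul_inv, Real.mul_self_sqrt (by norm_num)]
    norm_num
  simp [h]

lemma innQ_unit_mul (a x y : ℍ[ℝ]) (h : star a * a = 1) :
    innQ (a*x) (a*y) = innQ x y := by
  rw [innQ_mul_left, ← mul_assoc, h, one_mul]

/-- the Hermitian metric associated to the Euclidean product metric
equals the explicit formula defining the nearly Kähler metric g. -/
theorem stmt_2 (p q : ℍ[ℝ]) (hp : ‖p‖ = 1) (hq : ‖q‖ = 1)
    (Z Z' : ℍ[ℝ] × ℍ[ℝ]) (hZ : Tangent p q Z) (hZ' : Tangent p q Z') :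
    (1/2) * (innP Z Z' + innP (Jmap p q Z) (Jmap p q Z')) = gmet p q Z Z' := by
  have hnp : ((Quaternion.normSq p : ℝ) : ℍ[ℝ]) = 1 := by
    rw [Quaternion.normSq_eq_norm_mul_self, hp]; norm_num
  have hnq : ((Quaternion.normSq q : ℝ) : ℍ[ℝ]) = 1 := by
    rw [Quaternion.normSq_eq_norm_mul_self, hq]; norm_num
  have hp1 : star p * p = 1 := by rw [Quaternion.star_mul_self]; exact hnp
  have hp2 : p * star p = 1 := by rw [Quaternion.self_mul_star]; exact hnp
  have hq1 : star q * q = 1 := by rw [Quaternion.star_mul_self]; exact hnq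
  have hq2 : q * star q = 1 := by rw [Quaternion.self_mul_star]; exact hnq
  have hpi : p⁻¹ = star p := (inv_eq_of_mul_eq_one_right hp2)
  have hqi : q⁻¹ = star q := (inv_eq_of_mul_eq_one_right hq2)
  obtain ⟨U, V⟩ := Z
  obtain ⟨U', V'⟩ := Z'
  simp only [innP, Jmap, gmet, hpi, hqi, Prod.smul_fst, Prod.smul_snd]
  rw [innQ_smul3, innQ_smul3]
  -- units
  have hu1 : star (p * star q) * (p * star q) = 1 := by
    rw [star_mul, star_star, mul_assoc, ← mul_assoc (star p), hp1, one_mul, hq2]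
  have hu2 : star (q * star p) * (q * star p) = 1 := by
    rw [star_mul, star_star, mul_assoc, ← mul_assoc (star q), hq1, one_mul, hp2]
  -- the key reductions
  have hA : innQ (p * star q * V) (p * star q * V') = innQ V V' :=
    innQ_unit_mul _ _ _ hu1
  have hD : innQ (q * star p * U) (q * star p * U') = innQ U U' :=
    innQ_unit_mul _ _ _ hu2
  have hB : innQ (p * star q * V) U' = innQ (star p * U') (star q * V) := by
    rw [innQ_mul_left, star_mul, star_star, mul_assoc, innQ_mul_right, innQ_comm]
  have hC : innQ U (p * star q * V') = innQ (star p * U) (star q * V') := by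
    rw [innQ_comm, innQ_mul_left, star_mul, star_star, mul_assoc, innQ_mul_right]
    exact innQ_comm _ _
  have hE : innQ (q * star p * U) V' = innQ (star p * U) (star q * V') := by
    rw [innQ_mul_left, star_mul, star_star, mul_assoc, innQ_mul_right]
  have hF : innQ V (q * star p * U') = innQ (star p * U') (star q * V) := by
    rw [innQ_comm, innQ_mul_left, star_mul, star_star, mul_assoc, innQ_mul_right]
  simp only [innQ_sub_left, innQ_sub_right, innQ_add_left, innQ_add_right,
    innQ_neg_left, innQ_neg_right, innQ_two_left, innQ_two_right,
    hA, hB, hC, hD, hE, hF]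
  ring
end
end

section
/- Let a, b, c, p, q be unit quaternions and consider the map F : S³×S³ → S³×S³, F(p,q) = (apc⁻¹, bqc⁻¹), whose differential at (p,q) sends a tangent vector (U,V) to (aUc⁻¹, bVc⁻¹). Then F preserves the almost complex structure J: for every tangent vector Z = (U,V) at (p,q), one has J_{F(p,q)}(aUc⁻¹, bVc⁻¹) = (aU'c⁻¹, bV'c⁻¹) where (U',V') = J_{(p,q)}(U,V). In particular (aUc⁻¹, bVc⁻¹) is tangent to S³×S³ at (apc⁻¹, bqc⁻¹). -/
open Quaternion

noncomputable section

lemma re_mul_comm_s6 (x y : ℍ[ℝ]) : (x * y).re = (y * x).re := by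
  simp [Quaternion.re_mul]; ring

/-- the isometry F(p,q) = (apc⁻¹, bqc⁻¹) preserves J, and its
differential maps tangent vectors to tangent vectors. -/
theorem stmt_6 (a b c p q U V : ℍ[ℝ])
    (ha : ‖a‖ = 1) (hb : ‖b‖ = 1) (hc : ‖c‖ = 1) (hp : ‖p‖ = 1) (hq : ‖q‖ = 1)
    (hU : (p⁻¹ * U).re = 0) (hV : (q⁻¹ * V).re = 0) :
    Jmap (a * p * c⁻¹) (b * q * c⁻¹) (a * U * c⁻¹, b * V * c⁻¹)
      = (a * (Jmap p q (U, V)).1 * c⁻¹, b * (Jmap p q (U, V)).2 * c⁻¹) ∧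
    Tangent (a * p * c⁻¹) (b * q * c⁻¹) (a * U * c⁻¹, b * V * c⁻¹) := by
  have ha0 : a ≠ 0 := by intro h; simp [h] at ha
  have hb0 : b ≠ 0 := by intro h; simp [h] at hb
  have hc0 : c ≠ 0 := by intro h; simp [h] at hc
  have hp0 : p ≠ 0 := by intro h; simp [h] at hp
  have hq0 : q ≠ 0 := by intro h; simp [h] at hq
  constructor
  · simp only [Jmap, Prod.smul_mk, Prod.mk.injEq, smul_mul_assoc, mul_smul_comm]
    constructor <;>
    · congr 1
      simp only [mul_inv_rev, inv_inv, two_mul, mul_sub, sub_mul, mul_add, add_mul,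
        neg_mul, mul_neg, neg_add, mul_assoc,
        inv_mul_cancel_left₀ ha0, inv_mul_cancel_left₀ hb0, inv_mul_cancel_left₀ hc0,
        mul_inv_cancel_left₀ ha0, mul_inv_cancel_left₀ hb0, mul_inv_cancel_left₀ hc0]
  · constructor
    · show ((a * p * c⁻¹)⁻¹ * (a * U * c⁻¹)).re = 0
      have : (a * p * c⁻¹)⁻¹ * (a * U * c⁻¹) = c * (p⁻¹ * U) * c⁻¹ := by
        simp only [mul_inv_rev, inv_inv, mul_assoc, inv_mul_cancel_left₀ ha0]
      rw [this, re_mul_comm_s6, ← mul_assoc, inv_mul_cancel₀ hc0, one_mul, hU]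
    · show ((b * q * c⁻¹)⁻¹ * (b * V * c⁻¹)).re = 0
      have : (b * q * c⁻¹)⁻¹ * (b * V * c⁻¹) = c * (q⁻¹ * V) * c⁻¹ := by
        simp only [mul_inv_rev, inv_inv, mul_assoc, inv_mul_cancel_left₀ hb0]
      rw [this, re_mul_comm_s6, ← mul_assoc, inv_mul_cancel₀ hc0, one_mul, hV]
end
end

section
/- Let p, q be unit quaternions and let Z = (U,V) be a tangent vector to S³×S³ at (p,q). Let Q(U,V) = (−U, V) be the usual product structure. Then Q(Z) = (1/√3)·(2·P(J(Z)) − J(Z)) and P(Z) = (1/2)·(Z − √3·Q(J(Z))), where J and P are evaluated at (p,q). -/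
open Quaternion

noncomputable section

/-- the relations Q = (1/√3)(2PJ − J) and P = (1/2)(id − √3 QJ). -/
theorem stmt_9 (p q : ℍ[ℝ]) (hp : ‖p‖ = 1) (hq : ‖q‖ = 1)
    (Z : ℍ[ℝ] × ℍ[ℝ]) (hZ : Tangent p q Z) :
    Qmap Z = (Real.sqrt 3)⁻¹ • (2 • Pmap p q (Jmap p q Z) - Jmap p q Z) ∧
    Pmap p q Z = (1/2 : ℝ) • (Z - Real.sqrt 3 • Qmap (Jmap p q Z)) := by
  have hp0 : p ≠ 0 := fun h => by simp [h] at hp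
  have hq0 : q ≠ 0 := fun h => by simp [h] at hq
  have hs : (Real.sqrt 3) ≠ 0 := by positivity
  have hs2 : Real.sqrt 3 * Real.sqrt 3 = 3 := Real.mul_self_sqrt (by norm_num)
  have hab : ∀ x : ℍ[ℝ], p * q⁻¹ * (q * p⁻¹ * x) = x := fun x => by
    rw [mul_assoc q p⁻¹ x, mul_assoc, inv_mul_cancel_left₀ hq0, mul_inv_cancel_left₀ hp0]
  have hba : ∀ x : ℍ[ℝ], q * p⁻¹ * (p * q⁻¹ * x) = x := fun x => by
    rw [mul_assoc p q⁻¹ x, mul_assoc, inv_mul_cancel_left₀ hp0, mul_inv_cancel_left₀ hq0]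
  constructor <;>
  · refine Prod.ext ?_ ?_ <;>
    · simp only [Qmap, Pmap, Jmap, Prod.smul_fst, Prod.smul_snd, Prod.fst_sub, Prod.snd_sub,
        mul_smul_comm, smul_sub, smul_add, smul_neg, smul_smul, two_mul, mul_add, mul_sub, mul_neg,
        Prod.fst_neg, Prod.snd_neg, hab, hba]
      have hs3 : Real.sqrt 3 ^ 2 = 3 := Real.sq_sqrt (by norm_num)
      match_scalars <;> field_simp <;> linarith [hs3]
end
end

section
/- Let p, q be unit quaternions and let Z = (U,V) and Z' = (U',V') be tangent vectors to S³×S³ at (p,q). Then the Euclidean product metric and the nearly Kähler metric are related by ⟨Z, Z'⟩ = g(Z, Z') + (1/2)·g(Z, P(Z')), where ⟨Z,Z'⟩ = ⟨U,U'⟩ + ⟨V,V'⟩. -/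
open Quaternion

noncomputable section

lemma innQ_left_mul (c a b : ℍ[ℝ]) : innQ (c * a) (c * b) = normSq c * innQ a b := by
  simp [innQ, Quaternion.re_mul, Quaternion.imI_mul, Quaternion.imJ_mul, Quaternion.imK_mul,
    Quaternion.normSq_def']
  ring

/-- the Euclidean product metric in terms of g and P. -/
theorem stmt_10 (p q : ℍ[ℝ]) (hp : ‖p‖ = 1) (hq : ‖q‖ = 1)
    (Z Z' : ℍ[ℝ] × ℍ[ℝ]) (hZ : Tangent p q Z) (hZ' : Tangent p q Z') :
    innP Z Z' = gmet p q Z Z' + (1/2) * gmet p q Z (Pmap p q Z') := by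
  have hp0 : p ≠ 0 := by intro h; simp [h] at hp
  have hq0 : q ≠ 0 := by intro h; simp [h] at hq
  have hnp : normSq p⁻¹ = 1 := by
    rw [normSq_eq_norm_mul_self, norm_inv, hp]; norm_num
  have hnq : normSq q⁻¹ = 1 := by
    rw [normSq_eq_norm_mul_self, norm_inv, hq]; norm_num
  have key : ∀ (c : ℍ[ℝ]), c ≠ 0 → normSq c⁻¹ = 1 → ∀ a b : ℍ[ℝ],
      innQ a (c * b) = innQ (c⁻¹ * a) b := by
    intro c hc hn a b
    have := innQ_left_mul c⁻¹ a (c * b)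
    rw [hn, one_mul] at this
    rw [← this, ← mul_assoc, inv_mul_cancel₀ hc, one_mul]
  have h1 : innQ Z.1 (p * q⁻¹ * Z'.2) = innQ (p⁻¹ * Z.1) (q⁻¹ * Z'.2) := by
    rw [mul_assoc, key p hp0 hnp]
  have h2 : innQ Z.2 (q * p⁻¹ * Z'.1) = innQ (q⁻¹ * Z.2) (p⁻¹ * Z'.1) := by
    rw [mul_assoc, key q hq0 hnq]
  have h3 : innQ (p⁻¹ * Z.1) (q⁻¹ * (q * p⁻¹ * Z'.1)) = innQ Z.1 Z'.1 := by
    rw [← mul_assoc, ← mul_assoc, inv_mul_cancel₀ hq0, one_mul]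
    have := innQ_left_mul p⁻¹ Z.1 Z'.1
    rw [hnp, one_mul] at this
    exact this
  have h4 : innQ (p⁻¹ * (p * q⁻¹ * Z'.2)) (q⁻¹ * Z.2) = innQ Z'.2 Z.2 := by
    rw [← mul_assoc, ← mul_assoc, inv_mul_cancel₀ hp0, one_mul]
    have := innQ_left_mul q⁻¹ Z'.2 Z.2
    rw [hnq, one_mul] at this
    exact this
  simp only [innP, gmet, Pmap]
  rw [h1, h2, h3, h4, innQ_comm Z'.2 Z.2, innQ_comm (q⁻¹ * Z.2) (p⁻¹ * Z'.1)]
  ring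
end
end

section
/- Let E be a finite-dimensional real inner product space, let J : E → E be a linear map with J∘J = −id and ⟨Jx, Jy⟩ = ⟨x, y⟩ for all x, y ∈ E, and let P : E → E be a linear map with P∘P = id, ⟨Px, y⟩ = ⟨x, Py⟩ for all x, y ∈ E, and P∘J = −J∘P. Let L be a subspace of E such that J maps L onto the orthogonal complement of L. Suppose A, B : L → L are linear maps such that P(x) = A(x) + J(B(x)) for all x ∈ L. Then A and B are symmetric (⟨Ax, y⟩ = ⟨x, Ay⟩ and ⟨Bx, y⟩ = ⟨x, By⟩ for all x, y ∈ L), A and B commute (A∘B = B∘A), and A∘A + B∘B = id on L. -/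
open scoped RealInnerProductSpace

/-- pointwise linear algebra of the decomposition P|_L = A + J∘B along a
Lagrangian subspace L: A and B are symmetric, commute, and A² + B² = id. -/
theorem stmt_12 {E : Type*} [NormedAddCommGroup E] [InnerProductSpace ℝ E]
    [FiniteDimensional ℝ E]
    (J P : E →ₗ[ℝ] E)
    (hJ2 : ∀ x, J (J x) = -x)
    (hJinner : ∀ x y, ⟪J x, J y⟫ = ⟪x, y⟫)
    (hP2 : ∀ x, P (P x) = x)
    (hPsym : ∀ x y, ⟪P x, y⟫ = ⟪x, P y⟫)
    (hPJ : ∀ x, P (J x) = -J (P x))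
    (L : Submodule ℝ E)
    (hL : L.map J = Lᗮ)
    (A B : L →ₗ[ℝ] L)
    (hAB : ∀ x : L, P (x : E) = (A x : E) + J (B x : E)) :
    (∀ x y : L, ⟪(A x : E), (y : E)⟫ = ⟪(x : E), (A y : E)⟫) ∧
    (∀ x y : L, ⟪(B x : E), (y : E)⟫ = ⟪(x : E), (B y : E)⟫) ∧
    A ∘ₗ B = B ∘ₗ A ∧
    A ∘ₗ A + B ∘ₗ B = LinearMap.id := by
  have hJL : ∀ x : L, J (x : E) ∈ Lᗮ := fun x => hL ▸ Submodule.mem_map_of_mem x.2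
  have horth : ∀ x y : L, ⟪J (x : E), (y : E)⟫ = 0 := fun x y => by
    rw [real_inner_comm]
    exact (Submodule.mem_orthogonal L _).mp (hJL x) _ y.2
  -- inner of P with L elements
  have hPA : ∀ x y : L, ⟪P (x : E), (y : E)⟫ = ⟪(A x : E), (y : E)⟫ := fun x y => by
    rw [hAB x, inner_add_left, horth (B x) y, add_zero]
  have hAsym : ∀ x y : L, ⟪(A x : E), (y : E)⟫ = ⟪(x : E), (A y : E)⟫ := fun x y => by
    rw [← hPA x y, hPsym, real_inner_comm, hPA y x, real_inner_comm]
  have hPB : ∀ x y : L, ⟪P (x : E), J (y : E)⟫ = ⟪(B x : E), (y : E)⟫ := fun x y => by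
    have h0 : ⟪(A x : E), J (y : E)⟫ = 0 := by rw [real_inner_comm]; exact horth y (A x)
    rw [hAB x, inner_add_left, h0, hJinner, zero_add]
  have hBsym : ∀ x y : L, ⟪(B x : E), (y : E)⟫ = ⟪(x : E), (B y : E)⟫ := fun x y => by
    have h0 : ⟪(x : E), J (A y : E)⟫ = 0 := by rw [real_inner_comm]; exact horth (A y) x
    rw [← hPB x y, hPsym, hPJ, inner_neg_right, hAB y, map_add, hJ2, inner_add_right, h0,
      inner_neg_right]
    ring
  -- P² computation
  have key : ∀ x : L, ((A (A x) : E) + (B (B x) : E)) + J ((B (A x) : E) - (A (B x) : E))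
      = (x : E) := fun x => by
    have h := hP2 (x : E)
    rw [hAB x, map_add, hAB (A x), hPJ, hAB (B x), map_add, hJ2] at h
    rw [← h]; simp only [map_sub]; abel
  have hJinj : ∀ v : E, J v = 0 → v = 0 := fun v hv => by
    have := hJ2 v; rw [hv, map_zero] at this
    simpa using this.symm
  have split : ∀ x : L, (A (A x) : E) + (B (B x) : E) = (x : E) ∧
      J ((B (A x) : E) - (A (B x) : E)) = 0 := fun x => by
    have h := key x
    set u : E := (A (A x) : E) + (B (B x) : E) with hu
    set w : E := J ((B (A x) : E) - (A (B x) : E)) with hw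
    have huL : u ∈ L := add_mem (A (A x)).2 (B (B x)).2
    have hwo : w ∈ Lᗮ := by
      rw [hw, ← hL]
      exact Submodule.mem_map_of_mem (sub_mem (B (A x)).2 (A (B x)).2)
    have hdiff : (x : E) - u = w := by rw [← h]; abel
    have hwL : w ∈ L := hdiff ▸ sub_mem x.2 huL
    have hw0 : w = 0 := by
      have := (Submodule.mem_orthogonal L w).mp hwo w hwL
      simpa [inner_self_eq_zero] using this
    constructor
    · have := hdiff; rw [hw0] at this; exact (sub_eq_zero.mp this).symm
    · exact hw0
  refine ⟨hAsym, hBsym, ?_, ?_⟩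
  · ext x
    have h2 : (B (A x) : E) = (A (B x) : E) := sub_eq_zero.mp (hJinj _ (split x).2)
    simpa [LinearMap.comp_apply] using h2.symm
  · ext x
    have h1 := (split x).1
    simpa [LinearMap.add_apply, LinearMap.comp_apply] using h1
end

section
/- Let u be a unit quaternion. Consider the point (1, u) ∈ S³×S³ (the image of the immersion f : S³ → S³×S³, f(u) = (1,u)), whose tangent image consists of the vectors Z = (0, V) with Re(u⁻¹V) = 0. Then: (i) for all such Z = (0,V) and Z' = (0,V'), g(Z', J(Z)) = 0, i.e. the immersion is Lagrangian; (ii) P(Z) = −(1/2)·Z + (√3/2)·J(Z) for every such Z, i.e. all three angle functions of this Lagrangian immersion satisfy 2θ = 2π/3. Here J, g, and P are evaluated at the point (1,u). -/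
open Quaternion

noncomputable section

/-- the immersion u ↦ (1,u) is Lagrangian with all angle functions
satisfying 2θ = 2π/3, i.e. P = -(1/2)·id + (√3/2)·J on its tangent space. -/
theorem stmt_14 (u : ℍ[ℝ]) (hu : ‖u‖ = 1) :
    (∀ V V' : ℍ[ℝ], (u⁻¹ * V).re = 0 → (u⁻¹ * V').re = 0 →
      gmet 1 u (0, V') (Jmap 1 u (0, V)) = 0) ∧
    (∀ V : ℍ[ℝ], (u⁻¹ * V).re = 0 →
      Pmap 1 u (0, V) =
        -((1/2 : ℝ) • ((0, V) : ℍ[ℝ] × ℍ[ℝ])) + (Real.sqrt 3 / 2) • Jmap 1 u (0, V)) := by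
  have hs3 : Real.sqrt 3 ≠ 0 := by positivity
  have hn : normSq u = 1 := by
    have := Quaternion.normSq_eq_norm_mul_self (a := u)
    rw [hu] at this; simpa using this
  have hinv : u⁻¹ = star u := by
    rw [Quaternion.inv_def, hn]; simp
  have recomm : ∀ a b : ℍ[ℝ], (a * b).re = (b * a).re := by
    intro a b; simp only [Quaternion.re_mul]; ring
  have innsymm : ∀ a b : ℍ[ℝ], innQ a b = innQ b a := by
    intro a b
    have : (a * star b).re = (star (a * star b)).re := (Quaternion.re_star _).symm
    rw [innQ, innQ, this, star_mul, star_star]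
  have inncong : ∀ a b : ℍ[ℝ], innQ (star u * a) (star u * b) = innQ a b := by
    intro a b
    rw [innQ, innQ]
    have e : star u * a * star (star u * b) = star u * (a * star b * u) := by
      rw [star_mul, star_star]; simp [mul_assoc]
    rw [e, recomm, mul_assoc, Quaternion.self_mul_star, hn]
    simp
  have hJ : ∀ V : ℍ[ℝ], Jmap 1 u (0, V)
      = ((Real.sqrt 3)⁻¹ • (2 * (star u * V)), (Real.sqrt 3)⁻¹ • V) := by
    intro V
    simp [Jmap, hinv, Prod.smul_def]
  have innsmul : ∀ (r : ℝ) (a b : ℍ[ℝ]), innQ a (r • b) = r * innQ a b := by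
    intro r a b
    simp [innQ, Quaternion.star_smul, mul_smul_comm]
  have inn2 : ∀ a b : ℍ[ℝ], innQ (2 * a) b = 2 * innQ a b := by
    intro a b
    rw [innQ, innQ, mul_assoc, two_mul, Quaternion.re_add, two_mul]
  have key : Real.sqrt 3 / 2 * (Real.sqrt 3)⁻¹ = 1/2 := by
    field_simp
  constructor
  · intro V V' h h'
    rw [hJ]
    simp only [gmet, hinv, one_mul, inv_one, innsmul]
    have h0 : ∀ b : ℍ[ℝ], innQ 0 b = 0 := by intro b; simp [innQ]
    have e1 : innQ ((Real.sqrt 3)⁻¹ • (2 * (star u * V))) (star u * V')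
        = (Real.sqrt 3)⁻¹ * (2 * innQ V V') := by
      rw [innsymm, innsmul, innsymm, inn2, inncong]
    rw [e1, h0, h0, innsymm V' V]
    ring
  · intro V h
    rw [hJ]
    have lhs : Pmap 1 u (0, V) = (star u * V, 0) := by
      simp [Pmap, hinv]
    rw [lhs, Prod.ext_iff]
    refine ⟨?_, ?_⟩
    · show star u * V =
        (-((1/2 : ℝ) • ((0, V) : ℍ[ℝ] × ℍ[ℝ])) +
          (Real.sqrt 3 / 2) • (((Real.sqrt 3)⁻¹ • (2 * (star u * V)), (Real.sqrt 3)⁻¹ • V) : ℍ[ℝ] × ℍ[ℝ])).1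
    
      simp only [Prod.fst_add, Prod.fst_neg, Prod.smul_fst, smul_zero, neg_zero, zero_add,
        smul_smul, key]
      rw [two_mul, smul_add]
      module
    · show (0 : ℍ[ℝ]) =
        (-((1/2 : ℝ) • ((0, V) : ℍ[ℝ] × ℍ[ℝ])) +
          (Real.sqrt 3 / 2) • (((Real.sqrt 3)⁻¹ • (2 * (star u * V)), (Real.sqrt 3)⁻¹ • V) : ℍ[ℝ] × ℍ[ℝ])).2
      simp only [Prod.snd_add, Prod.snd_neg, Prod.smul_snd, smul_smul, key]
      module
end
end

section
/- Let u be a unit quaternion. Consider the point (u, u) ∈ S³×S³ (the image of the diagonal immersion f : S³ → S³×S³, f(u) = (u,u)), whose tangent image consists of the vectors Z = (U, U) with Re(u⁻¹U) = 0. Then: (i) for all such Z = (U,U) and Z' = (U',U'), g(Z', J(Z)) = 0, i.e. the immersion is Lagrangian; (ii) P(Z) = Z for every such Z, i.e. all three angle functions of this Lagrangian immersion satisfy 2θ = 0. Here J, g, and P are evaluated at the point (u,u). -/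
open Quaternion

noncomputable section

/-- the diagonal immersion u ↦ (u,u) is Lagrangian with all angle
functions satisfying 2θ = 0, i.e. P = id on its tangent space. -/
theorem stmt_15 (u : ℍ[ℝ]) (hu : ‖u‖ = 1) :
    (∀ U U' : ℍ[ℝ], (u⁻¹ * U).re = 0 → (u⁻¹ * U').re = 0 →
      gmet u u (U', U') (Jmap u u (U, U)) = 0) ∧
    (∀ U : ℍ[ℝ], (u⁻¹ * U).re = 0 →
      Pmap u u (U, U) = (U, U)) := by
  have hu0 : u ≠ 0 := by
    intro h; rw [h, norm_zero] at hu; norm_num at hu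
  have huu : u * u⁻¹ = 1 := mul_inv_cancel₀ hu0
  constructor
  · intro U U' hU hU'
    have hJ : Jmap u u (U, U) = (Real.sqrt 3)⁻¹ • ((U, -U) : ℍ[ℝ] × ℍ[ℝ]) := by
      simp only [Jmap, huu, mul_one, one_mul]
      congr 1
      refine Prod.ext ?_ ?_ <;> dsimp <;> rw [two_mul] <;> abel
    rw [hJ]
    simp only [gmet, innQ, Prod.smul_fst, Prod.smul_snd, Prod.fst, Prod.snd,
      smul_eq_mul]
    simp only [Quaternion.star_smul, star_neg, mul_smul_comm, smul_mul_assoc,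
      mul_neg, neg_neg, smul_neg, Quaternion.re_smul, Quaternion.re_neg,
      smul_eq_mul]
    have hsym : ∀ a b : ℍ[ℝ], (a * star b).re = (b * star a).re := by
      intro a b
      simp [Quaternion.re_mul, Quaternion.re_star, Quaternion.imI_star,
        Quaternion.imJ_star, Quaternion.imK_star]
      ring
    rw [hsym (u⁻¹ * U) (u⁻¹ * U')]
    ring
  · intro U hU
    simp [Pmap, huu]
end
end

section
/- Let u be a unit quaternion and let i, j, k denote the imaginary quaternionic units. Consider the immersion f : S³ → S³×S³, f(u) = (u, u·i), whose tangent image at the point (u, u·i) consists of the vectors Z_a = (u·a, u·a·i) for imaginary quaternions a. Then: (i) for all imaginary quaternions a, b, g(Z_a, J(Z_b)) = 0, i.e. the immersion is Lagrangian; (ii) P(Z_i) = Z_i, P(Z_j) = −Z_j, and P(Z_k) = −Z_k; that is, the angle functions of this Lagrangian immersion are (2θ₁, 2θ₂, 2θ₃) = (0, π, π). Here J, g, and P are evaluated at the point (u, u·i). -/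
open Quaternion

noncomputable section

lemma innQ_mul_unit (u x y : ℍ[ℝ]) : innQ (u*x) (u*y) = normSq u * innQ x y := by
  simp only [innQ, Quaternion.re_mul, Quaternion.re_star, Quaternion.imI_star,
    Quaternion.imJ_star, Quaternion.imK_star, Quaternion.imI_mul, Quaternion.imJ_mul,
    Quaternion.imK_mul, Quaternion.normSq_def']
  ring

lemma innQ_smul_right (s : ℝ) (x y : ℍ[ℝ]) : innQ x (s • y) = s * innQ x y := by
  simp [innQ, mul_smul_comm]

lemma innQ_smul_left (s : ℝ) (x y : ℍ[ℝ]) : innQ (s • x) y = s * innQ x y := by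
  simp [innQ, smul_mul_assoc]

lemma qi_re : qi.re = 0 := rfl
lemma qi_imI : qi.imI = 1 := rfl
lemma qi_imJ : qi.imJ = 0 := rfl
lemma qi_imK : qi.imK = 0 := rfl
lemma qj_re : qj.re = 0 := rfl
lemma qj_imI : qj.imI = 0 := rfl
lemma qj_imJ : qj.imJ = 1 := rfl
lemma qj_imK : qj.imK = 0 := rfl
lemma qk_re : qk.re = 0 := rfl
lemma qk_imI : qk.imI = 0 := rfl
lemma qk_imJ : qk.imJ = 0 := rfl
lemma qk_imK : qk.imK = 1 := rfl

/-- the immersion u ↦ (u, u·i) is Lagrangian with angle functions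
(2θ₁, 2θ₂, 2θ₃) = (0, π, π). -/
theorem stmt_16 (u : ℍ[ℝ]) (hu : ‖u‖ = 1) :
    (∀ a b : ℍ[ℝ], a.re = 0 → b.re = 0 →
      gmet u (u * qi) (u * a, u * a * qi) (Jmap u (u * qi) (u * b, u * b * qi)) = 0) ∧
    Pmap u (u * qi) (u * qi, u * qi * qi) = (u * qi, u * qi * qi) ∧
    Pmap u (u * qi) (u * qj, u * qj * qi) = -((u * qj, u * qj * qi) : ℍ[ℝ] × ℍ[ℝ]) ∧
    Pmap u (u * qi) (u * qk, u * qk * qi) = -((u * qk, u * qk * qi) : ℍ[ℝ] × ℍ[ℝ]) := by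
  have hn : normSq u = 1 := by rw [normSq_eq_norm_mul_self, hu]; ring
  have hinvu : u⁻¹ = star u := by rw [Quaternion.inv_def, hn]; simp
  have hnqi : normSq qi = 1 := by rw [Quaternion.normSq_def']; simp [qi]
  have hinvqi : (u*qi)⁻¹ = star qi * star u := by
    rw [mul_inv_rev, hinvu, Quaternion.inv_def, hnqi]; simp
  have hsu : star u * u = 1 := by
    rw [Quaternion.star_mul_self, hn]; simp
  have hc1 : ∀ x : ℍ[ℝ], star u * (u * x) = x := fun x => by
    rw [← mul_assoc, hsu, one_mul]
  refine ⟨?_, ?_, ?_, ?_⟩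
  · intro a b ha hb
    have key1 : 2 * (u * (star qi * star u) * (u * b * qi)) - u * b
        = u * (2 * (star qi * (b * qi)) - b) := by
      have h : u * (star qi * star u) * (u * b * qi) = u * (star qi * (b * qi)) := by
        simp only [mul_assoc]; rw [hc1]
      rw [h]; noncomm_ring
    have key2 : -(2 * (u * qi * star u * (u * b))) + u * b * qi
        = u * (-(2 * (qi * b)) + b * qi) := by
      have h : u * qi * star u * (u * b) = u * (qi * b) := by
        simp only [mul_assoc]; rw [hc1]
      rw [h]; noncomm_ring
    simp only [gmet, Jmap, hinvu, hinvqi, Prod.smul_fst, Prod.smul_snd, key1, key2]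
    simp only [mul_smul_comm, innQ_smul_right, innQ_smul_left, mul_assoc, hc1]
    rw [innQ_mul_unit, innQ_mul_unit, hn]
    simp only [innQ, two_mul, ha, hb, Quaternion.re_mul, Quaternion.re_star, Quaternion.imI_star,
      Quaternion.imJ_star, Quaternion.imK_star, Quaternion.imI_mul, Quaternion.imJ_mul,
      Quaternion.imK_mul, Quaternion.re_add, Quaternion.imI_add, Quaternion.imJ_add,
      Quaternion.imK_add, Quaternion.re_sub, Quaternion.imI_sub, Quaternion.imJ_sub,
      Quaternion.imK_sub, Quaternion.re_neg, Quaternion.imI_neg, Quaternion.imJ_neg,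
      Quaternion.imK_neg, qi_re, qi_imI, qi_imJ, qi_imK]
    ring
  · simp only [Pmap, hinvu, hinvqi]
    have h1 : u * (star qi * star u) * (u * qi * qi) = u * (star qi * (qi * qi)) := by
      simp only [mul_assoc]; rw [hc1]
    have h2 : u * qi * star u * (u * qi) = u * (qi * qi) := by
      simp only [mul_assoc]; rw [hc1]
    rw [h1, h2, Prod.mk.injEq]
    constructor
    · congr 1
      ext <;> simp [qi_re, qi_imI, qi_imJ, qi_imK, Quaternion.re_mul, Quaternion.imI_mul, Quaternion.imJ_mul,
        Quaternion.imK_mul, Quaternion.re_star, Quaternion.imI_star, Quaternion.imJ_star,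
        Quaternion.imK_star]
    · rw [mul_assoc]
  · simp only [Pmap, hinvu, hinvqi, Prod.neg_mk]
    have h1 : u * (star qi * star u) * (u * qj * qi) = u * (star qi * (qj * qi)) := by
      simp only [mul_assoc]; rw [hc1]
    have h2 : u * qi * star u * (u * qj) = u * (qi * qj) := by
      simp only [mul_assoc]; rw [hc1]
    rw [h1, h2, Prod.mk.injEq]
    constructor
    · rw [show -(u * qj) = u * -qj by rw [mul_neg]]; congr 1
      ext <;> simp [qi_re, qi_imI, qi_imJ, qi_imK, qj_re, qj_imI, qj_imJ, qj_imK, Quaternion.re_mul, Quaternion.imI_mul, Quaternion.imJ_mul,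
        Quaternion.imK_mul, Quaternion.re_star, Quaternion.imI_star, Quaternion.imJ_star,
        Quaternion.imK_star]
    · rw [show -(u * qj * qi) = u * -(qj * qi) by rw [mul_assoc, mul_neg]]; congr 1
      ext <;> simp [qi_re, qi_imI, qi_imJ, qi_imK, qj_re, qj_imI, qj_imJ, qj_imK, Quaternion.re_mul, Quaternion.imI_mul, Quaternion.imJ_mul,
        Quaternion.imK_mul, Quaternion.re_neg, Quaternion.imI_neg, Quaternion.imJ_neg,
        Quaternion.imK_neg]
  · simp only [Pmap, hinvu, hinvqi, Prod.neg_mk]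
    have h1 : u * (star qi * star u) * (u * qk * qi) = u * (star qi * (qk * qi)) := by
      simp only [mul_assoc]; rw [hc1]
    have h2 : u * qi * star u * (u * qk) = u * (qi * qk) := by
      simp only [mul_assoc]; rw [hc1]
    rw [h1, h2, Prod.mk.injEq]
    constructor
    · rw [show -(u * qk) = u * -qk by rw [mul_neg]]; congr 1
      ext <;> simp [qi_re, qi_imI, qi_imJ, qi_imK, qk_re, qk_imI, qk_imJ, qk_imK, Quaternion.re_mul, Quaternion.imI_mul, Quaternion.imJ_mul,
        Quaternion.imK_mul, Quaternion.re_star, Quaternion.imI_star, Quaternion.imJ_star,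
        Quaternion.imK_star]
    · rw [show -(u * qk * qi) = u * -(qk * qi) by rw [mul_assoc, mul_neg]]; congr 1
      ext <;> simp [qi_re, qi_imI, qi_imJ, qi_imK, qk_re, qk_imI, qk_imJ, qk_imK, Quaternion.re_mul, Quaternion.imI_mul, Quaternion.imJ_mul,
        Quaternion.imK_mul, Quaternion.re_neg, Quaternion.imI_neg, Quaternion.imJ_neg,
        Quaternion.imK_neg]
end
end

section
/- Let u be a unit quaternion and let i, j, k denote the imaginary quaternionic units. Consider the map f : ℍ∖{0} → ℍ×ℍ, f(u) = (u·i·u⁻¹, u·j·u⁻¹), and at the point (p,q) = (u·i·u⁻¹, u·j·u⁻¹) define T₁ = (0, 2u·k·u⁻¹), T₂ = (−2u·k·u⁻¹, 0), and T₃ = (−2u·j·u⁻¹, 2u·i·u⁻¹). Then: (i) the Fréchet derivative of f at u in the directions u·i, u·j, −u·k equals T₁, T₂, T₃ respectively; (ii) g(Tₘ, Tₙ) = (16/3)·δₘₙ for m, n ∈ {1,2,3}, so f(S³) is a round sphere of g-radius 4/√3; (iii) g(Tₘ, J(Tₙ)) = 0 for all m, n, i.e. f is a Lagrangian immersion. Here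 g and J are evaluated at the point (u·i·u⁻¹, u·j·u⁻¹). -/
open Quaternion

noncomputable section

lemma two_coe : (2:ℍ[ℝ]) = ((2:ℝ):ℍ[ℝ]) := rfl
lemma qii : qi * qi = -1 := by ext <;> simp <;> simp [qi]
lemma qjj : qj * qj = -1 := by ext <;> simp <;> simp [qj]
lemma qkk : qk * qk = -1 := by ext <;> simp <;> simp [qk]
lemma qij : qi * qj = qk := by ext <;> simp <;> simp [qi, qj, qk]
lemma qji : qj * qi = -qk := by ext <;> simp <;> simp [qi, qj, qk]
lemma qjk : qj * qk = qi := by ext <;> simp <;> simp [qi, qj, qk]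
lemma qkj : qk * qj = -qi := by ext <;> simp <;> simp [qi, qj, qk]
lemma qki : qk * qi = qj := by ext <;> simp <;> simp [qi, qj, qk]
lemma qik : qi * qk = -qj := by ext <;> simp <;> simp [qi, qj, qk]
lemma star_qi : star qi = -qi := by ext <;> simp <;> simp [qi]
lemma star_qj : star qj = -qj := by ext <;> simp <;> simp [qj]
lemma star_qk : star qk = -qk := by ext <;> simp <;> simp [qk]
lemma qiiA (x : ℍ[ℝ]) : qi * (qi * x) = -x := by rw [← mul_assoc, qii, neg_one_mul]
lemma qjjA (x : ℍ[ℝ]) : qj * (qj * x) = -x := by rw [← mul_assoc, qjj, neg_one_mul]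
lemma qkkA (x : ℍ[ℝ]) : qk * (qk * x) = -x := by rw [← mul_assoc, qkk, neg_one_mul]
lemma qijA (x : ℍ[ℝ]) : qi * (qj * x) = qk * x := by rw [← mul_assoc, qij]
lemma qjiA (x : ℍ[ℝ]) : qj * (qi * x) = -(qk * x) := by rw [← mul_assoc, qji, neg_mul]
lemma qjkA (x : ℍ[ℝ]) : qj * (qk * x) = qi * x := by rw [← mul_assoc, qjk]
lemma qkjA (x : ℍ[ℝ]) : qk * (qj * x) = -(qi * x) := by rw [← mul_assoc, qkj, neg_mul]
lemma qkiA (x : ℍ[ℝ]) : qk * (qi * x) = qj * x := by rw [← mul_assoc, qki]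
lemma qikA (x : ℍ[ℝ]) : qi * (qk * x) = -(qj * x) := by rw [← mul_assoc, qik, neg_mul]

set_option maxHeartbeats 1000000

theorem stmt_17 (u : ℍ[ℝ]) (hu : ‖u‖ = 1)
    (T : Fin 3 → ℍ[ℝ] × ℍ[ℝ])
    (hT1 : T 0 = (0, 2 * (u * qk * u⁻¹)))
    (hT2 : T 1 = (-(2 * (u * qk * u⁻¹)), 0))
    (hT3 : T 2 = (-(2 * (u * qj * u⁻¹)), 2 * (u * qi * u⁻¹))) :
    (∃ D : ℍ[ℝ] →L[ℝ] ℍ[ℝ] × ℍ[ℝ],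
      HasFDerivAt (fun x : ℍ[ℝ] => ((x * qi * x⁻¹, x * qj * x⁻¹) : ℍ[ℝ] × ℍ[ℝ])) D u ∧
      D (u * qi) = T 0 ∧ D (u * qj) = T 1 ∧ D (-(u * qk)) = T 2) ∧
    (∀ m n : Fin 3,
      gmet (u * qi * u⁻¹) (u * qj * u⁻¹) (T m) (T n)
        = (16/3) * (if m = n then 1 else 0)) ∧
    (∀ m n : Fin 3,
      gmet (u * qi * u⁻¹) (u * qj * u⁻¹) (T m)
        (Jmap (u * qi * u⁻¹) (u * qj * u⁻¹) (T n)) = 0) := by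
  have hu0 : u ≠ 0 := by intro h; rw [h] at hu; simp at hu
  have huv : u * u⁻¹ = 1 := mul_inv_cancel₀ hu0
  have hvu : u⁻¹ * u = 1 := inv_mul_cancel₀ hu0
  have hA : ∀ x : ℍ[ℝ], u⁻¹ * (u * x) = x := fun x => by rw [← mul_assoc, hvu, one_mul]
  have hB : ∀ x : ℍ[ℝ], u * (u⁻¹ * x) = x := fun x => by rw [← mul_assoc, huv, one_mul]
  have hsu : star u = u⁻¹ := by
    refine (inv_eq_of_mul_eq_one_right ?_).symm
    rw [Quaternion.self_mul_star]
    have : normSq u = 1 := by rw [Quaternion.normSq_eq_norm_mul_self, hu]; norm_num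
    rw [this]; norm_num
  have hsv : star (u⁻¹) = u := by rw [← hsu, star_star]
  have hre : ∀ w : ℍ[ℝ], (u * (w * u⁻¹)).re = w.re := by
    intro w
    have h1 : (u * (w * u⁻¹)).re = ((w * u⁻¹) * u).re := by
      simp [Quaternion.re_mul]; ring
    rw [h1, mul_assoc, hvu, mul_one]
  have pinv : (u * qi * u⁻¹)⁻¹ = -(u * (qi * u⁻¹)) := by
    refine inv_eq_of_mul_eq_one_right ?_
    simp only [mul_neg, mul_assoc, hA, qiiA, neg_neg, huv, ← mul_assoc]
    simp [mul_assoc, hA, qiiA, huv]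
  have qinv : (u * qj * u⁻¹)⁻¹ = -(u * (qj * u⁻¹)) := by
    refine inv_eq_of_mul_eq_one_right ?_
    simp [mul_assoc, hA, qjjA, huv]
  refine ⟨?_, ?_, ?_⟩
  · have d1 : HasFDerivAt (fun x : ℍ[ℝ] => x * qi * x⁻¹) _ u :=
      ((hasFDerivAt_id u).mul_const' qi).mul' (hasFDerivAt_inv' (𝕜 := ℝ) hu0)
    have d2 : HasFDerivAt (fun x : ℍ[ℝ] => x * qj * x⁻¹) _ u :=
      ((hasFDerivAt_id u).mul_const' qj).mul' (hasFDerivAt_inv' (𝕜 := ℝ) hu0)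
    refine ⟨_, d1.prodMk d2, ?_, ?_, ?_⟩ <;>
      simp only [hT1, hT2, hT3] <;>
      simp only [ContinuousLinearMap.prod_apply, ContinuousLinearMap.add_apply,
        ContinuousLinearMap.smul_apply, ContinuousLinearMap.smulRight_apply,
        ContinuousLinearMap.neg_apply, ContinuousLinearMap.mulLeftRight_apply,
        ContinuousLinearMap.id_apply, ContinuousLinearMap.coe_id', id_eq, id,
        smul_eq_mul, Prod.mk.injEq] <;>
      simp only [mul_assoc, hA, hB, mul_neg, neg_mul, neg_neg, qiiA, qjjA, qkkA,
          qijA, qjiA, qjkA, qkjA, qkiA, qikA, huv, ← two_mul, add_neg_cancel,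
          neg_add_cancel, and_self, and_true, true_and] <;>
      norm_num [Fin.ext_iff] <;>
      simp only [mul_assoc, qiiA, qjjA, qijA, qjiA, qkiA, qkjA, mul_neg, neg_mul, huv] <;>
      constructor <;> rw [← sub_eq_zero] <;> noncomm_ring
  · intro m n
    fin_cases m <;> fin_cases n <;>
    · simp only [Fin.isValue, Fin.mk_one, Fin.reduceFinMk, hT1, hT2, hT3, gmet, innQ,
        pinv, qinv]
      simp only [two_coe, coe_mul_eq_smul, Quaternion.mul_coe_eq_smul, Quaternion.star_coe, Quaternion.star_smul, star_mul,
        star_neg, star_zero, star_qi, star_qj, star_qk, hsu, hsv,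
        smul_mul_assoc, mul_smul_comm, smul_neg, neg_smul, smul_zero,
        mul_neg, neg_mul, neg_neg, mul_zero, zero_mul,
        mul_assoc, hA, hB, qiiA, qjjA, qkkA, qijA, qjiA, qjkA, qkjA, qkiA, qikA,
        qii, qjj, qkk, qij, qji, qjk, qkj, qki, qik, huv, hvu,
        Quaternion.re_smul, Quaternion.re_neg, Quaternion.re_zero, Quaternion.re_one, hre, qi_re, qj_re, qk_re, mul_one, one_mul]
      norm_num [Fin.ext_iff]
  · intro m n
    fin_cases m <;> fin_cases n <;>
    · simp only [Fin.isValue, Fin.mk_one, Fin.reduceFinMk, hT1, hT2, hT3, gmet, innQ,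
        Jmap, Prod.smul_fst, Prod.smul_snd, pinv, qinv]
      simp only [two_coe, coe_mul_eq_smul, Quaternion.mul_coe_eq_smul, Quaternion.star_coe, Quaternion.star_smul, star_mul,
        star_neg, star_zero, star_sub, star_add, star_qi, star_qj, star_qk, hsu, hsv,
        smul_mul_assoc, mul_smul_comm, smul_neg, neg_smul, smul_zero, smul_add, smul_sub,
        mul_neg, neg_mul, neg_neg, mul_zero, zero_mul, mul_add, add_mul, mul_sub, sub_mul,
        mul_assoc, hA, hB, qiiA, qjjA, qkkA, qijA, qjiA, qjkA, qkjA, qkiA, qikA,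
        qii, qjj, qkk, qij, qji, qjk, qkj, qki, qik, huv, hvu,
        Quaternion.re_smul, Quaternion.re_neg, Quaternion.re_zero, Quaternion.re_one, Quaternion.re_add, Quaternion.re_sub, hre, qi_re, qj_re, qk_re,
        mul_one, one_mul]
      try norm_num
      try ring_nf
      try norm_num
end
end

section
/- Let u be a unit quaternion and let i, j, k denote the imaginary quaternionic units. At the point (p,q) = (u·i·u⁻¹, u·j·u⁻¹) ∈ S³×S³, consider the tangent vectors T₁ = (0, 2u·k·u⁻¹), T₂ = (−2u·k·u⁻¹, 0), and T₃ = (−2u·j·u⁻¹, 2u·i·u⁻¹) spanning the tangent space to the Lagrangian immersion f(u) = (u·i·u⁻¹, u·j·u⁻¹). Then the almost product structure P satisfies P(T₁) = −(1/2)·(T₁ − √3·J(T₁)), P(T₂) = −(1/2)·(T₂ + √3·J(T₂)), and P(T₃) = T₃; that is, the angle functions of this Lagrangian immersion are (2θ₁, 2θ₂, 2θ₃) = (2π/3, 4π/3, 0), and hence this immersion is not totally geodesic. Here J and P are evaluated at the point (u·i·u⁻¹, u·j·u⁻¹). -/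
open Quaternion

noncomputable section

lemma qunits : qi * qj = qk ∧ qj * qi = -qk ∧ qk * qi = qj ∧ qk * qj = -qi ∧
    qi * qi = -1 ∧ qj * qj = -1 ∧ qk * qk = -1 := by
  refine ⟨?_, ?_, ?_, ?_, ?_, ?_, ?_⟩ <;>
    ext <;> simp [Quaternion.re_mul, Quaternion.imI_mul,
      Quaternion.imJ_mul, Quaternion.imK_mul] <;> simp [qi, qj, qk]

lemma myConjMul (u : ℍ[ℝ]) (hu0 : u ≠ 0) (a b : ℍ[ℝ]) :
    (u * a * u⁻¹) * (u * b * u⁻¹) = u * (a * b) * u⁻¹ := by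
  have h2 : u⁻¹ * u = 1 := inv_mul_cancel₀ hu0
  have h : u⁻¹ * (u * (b * u⁻¹)) = b * u⁻¹ := by rw [← mul_assoc, h2, one_mul]
  simp only [mul_assoc, h]

lemma myConjMulInv (u : ℍ[ℝ]) (hu0 : u ≠ 0) {a b c : ℍ[ℝ]} (hbinv : b⁻¹ = -b)
    (h : a * b = c) : (u * a * u⁻¹) * (u * b * u⁻¹)⁻¹ = -(u * c * u⁻¹) := by
  rw [mul_inv_rev, mul_inv_rev, inv_inv, hbinv]
  have key := myConjMul u hu0 a (-b)
  rw [mul_assoc u (-b) u⁻¹] at key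
  rw [key, mul_neg, h, mul_neg, neg_mul]

lemma two_middle (x y : ℍ[ℝ]) : x * (2 * y) = 2 * (x * y) := by
  rw [← mul_assoc, mul_two x, two_mul, add_mul]

/-- for the Lagrangian immersion u ↦ (uiu⁻¹, uju⁻¹), the almost
product structure acts on the tangent frame T₁, T₂, T₃ with angle functions
(2θ₁, 2θ₂, 2θ₃) = (2π/3, 4π/3, 0). -/
theorem stmt_18 (u : ℍ[ℝ]) (hu : ‖u‖ = 1)
    (T₁ T₂ T₃ : ℍ[ℝ] × ℍ[ℝ])
    (hT1 : T₁ = (0, 2 * (u * qk * u⁻¹)))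
    (hT2 : T₂ = (-(2 * (u * qk * u⁻¹)), 0))
    (hT3 : T₃ = (-(2 * (u * qj * u⁻¹)), 2 * (u * qi * u⁻¹))) :
    Pmap (u * qi * u⁻¹) (u * qj * u⁻¹) T₁
      = -((1/2 : ℝ) • (T₁ - Real.sqrt 3 • Jmap (u * qi * u⁻¹) (u * qj * u⁻¹) T₁)) ∧
    Pmap (u * qi * u⁻¹) (u * qj * u⁻¹) T₂
      = -((1/2 : ℝ) • (T₂ + Real.sqrt 3 • Jmap (u * qi * u⁻¹) (u * qj * u⁻¹) T₂)) ∧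
    Pmap (u * qi * u⁻¹) (u * qj * u⁻¹) T₃ = T₃ := by
  obtain ⟨hij, hji, hki, hkj, hii, hjj, hkk⟩ := qunits
  have hu0 : u ≠ 0 := by intro h; simp [h] at hu
  have h1 : u * u⁻¹ = 1 := mul_inv_cancel₀ hu0
  have hiinv : qi⁻¹ = -qi := by
    apply inv_eq_of_mul_eq_one_right; rw [mul_neg, hii, neg_neg]
  have hjinv : qj⁻¹ = -qj := by
    apply inv_eq_of_mul_eq_one_right; rw [mul_neg, hjj, neg_neg]
  have hA : (u * qi * u⁻¹) * (u * qj * u⁻¹)⁻¹ = -(u * qk * u⁻¹) :=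
    myConjMulInv u hu0 hjinv hij
  have hB : (u * qj * u⁻¹) * (u * qi * u⁻¹)⁻¹ = u * qk * u⁻¹ := by
    have := myConjMulInv u hu0 hiinv hji
    simpa [mul_neg, neg_mul, neg_neg] using this
  have hC : (u * qk * u⁻¹) * (u * qk * u⁻¹) = -1 := by
    rw [myConjMul u hu0, hkk, mul_neg, mul_one, neg_mul, h1]
  have k1 : -(u * qk * u⁻¹) * (2 * (u * qk * u⁻¹)) = 2 := by
    rw [neg_mul, two_middle, hC]; norm_num
  have k2 : (u * qk * u⁻¹) * -(2 * (u * qk * u⁻¹)) = 2 := by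
    rw [mul_neg, two_middle, hC]; norm_num
  have k3 : -(u * qk * u⁻¹) * (2 * (u * qi * u⁻¹)) = -(2 * (u * qj * u⁻¹)) := by
    rw [neg_mul, two_middle, myConjMul u hu0, hki]
  have k4 : (u * qk * u⁻¹) * -(2 * (u * qj * u⁻¹)) = 2 * (u * qi * u⁻¹) := by
    rw [mul_neg, two_middle, myConjMul u hu0, hkj, mul_neg, neg_mul, mul_neg, neg_neg]
  have hs3 : ∀ X : ℍ[ℝ] × ℍ[ℝ], Real.sqrt 3 • ((Real.sqrt 3)⁻¹ • X) = X := by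
    intro X
    rw [smul_smul, mul_inv_cancel₀ (by positivity : Real.sqrt 3 ≠ 0), one_smul]
  have hs3q : ∀ x : ℍ[ℝ], Real.sqrt 3 • ((Real.sqrt 3)⁻¹ • x) = x := by
    intro x
    rw [smul_smul, mul_inv_cancel₀ (by positivity : Real.sqrt 3 ≠ 0), one_smul]
  subst hT1 hT2 hT3
  have c4 : (4:ℍ[ℝ]) = ((4:ℝ):ℍ[ℝ]) := by norm_cast
  have c2 : (2:ℍ[ℝ]) = ((2:ℝ):ℍ[ℝ]) := by norm_cast
  refine ⟨?_, ?_, ?_⟩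
  · simp only [Pmap, Jmap, hs3, hs3q, hA, hB, k1, mul_zero, zero_mul, neg_zero,
      Prod.mk_sub_mk, Prod.mk_add_mk, Prod.smul_mk, Prod.neg_mk, Prod.mk.injEq,
      sub_zero, zero_sub, add_zero, zero_add, neg_neg, sub_self, smul_zero]
    refine ⟨?_, trivial⟩
    norm_num
    ext <;> simp [c4, c2] <;> norm_num
  · simp only [Pmap, Jmap, hs3, hs3q, hA, hB, k2, mul_zero, zero_mul, neg_zero,
      Prod.mk_sub_mk, Prod.mk_add_mk, Prod.smul_mk, Prod.neg_mk, Prod.mk.injEq,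
      sub_zero, zero_sub, add_zero, zero_add, neg_neg, neg_add_cancel, smul_zero]
    refine ⟨trivial, ?_⟩
    norm_num
    ext <;> simp [c4, c2] <;> norm_num
  · simp only [Pmap, hA, hB, k3, k4]
end
end

section
/- Identify ℝ⁴ with the quaternions ℍ via the basis (1, i, j, k), and for real u, v, w write ũ = (√3/2)u, ṽ = (√3/2)v, w̃ = (√3/2)w. Define p(u,w) = cos(ũ)cos(w̃) + cos(ũ)sin(w̃)·i + sin(ũ)cos(w̃)·j + sin(ũ)sin(w̃)·k and q(u,v) = (1/√2)·[cos(ṽ)(sin(ũ)+cos(ũ)) + sin(ṽ)(sin(ũ)+cos(ũ))·i + cos(ṽ)(sin(ũ)−cos(ũ))·j + sin(ṽ)(sin(ũ)−cos(ũ))·k], and let f : ℝ³ → ℍ×ℍ be f(u,v,w) = (p(u,w), q(u,v)). Then: (i) p(u,w) and q(u,v) are unit quaternions for all u, v, w, so f maps into S³×S³; (ii) the partial derivatives f_u, f_v, f_w of f at (u,v,w) form a g-orthonormal triple at the point f(u,v,w): g(f_u,f_u) = g(f_v,f_v) = g(f_w,f_w) = 1 and g(f_u,f_v) = g(f_u,f_w)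 = g(f_v,f_w) = 0; (iii) g(f_a, J(f_b)) = 0 for all a, b ∈ {u,v,w}, i.e. f is a flat Lagrangian immersion (a flat Lagrangian torus). Here g and J are evaluated at the point f(u,v,w). -/
open Quaternion

noncomputable section

/-- The first factor of the flat Lagrangian torus. -/
def pTor (u w : ℝ) : ℍ[ℝ] :=
  ⟨Real.cos (Real.sqrt 3 / 2 * u) * Real.cos (Real.sqrt 3 / 2 * w),
   Real.cos (Real.sqrt 3 / 2 * u) * Real.sin (Real.sqrt 3 / 2 * w),
   Real.sin (Real.sqrt 3 / 2 * u) * Real.cos (Real.sqrt 3 / 2 * w),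
   Real.sin (Real.sqrt 3 / 2 * u) * Real.sin (Real.sqrt 3 / 2 * w)⟩

/-- The second factor of the flat Lagrangian torus. -/
def qTor (u v : ℝ) : ℍ[ℝ] :=
  (Real.sqrt 2)⁻¹ •
  (⟨Real.cos (Real.sqrt 3 / 2 * v) *
      (Real.sin (Real.sqrt 3 / 2 * u) + Real.cos (Real.sqrt 3 / 2 * u)),
    Real.sin (Real.sqrt 3 / 2 * v) *
      (Real.sin (Real.sqrt 3 / 2 * u) + Real.cos (Real.sqrt 3 / 2 * u)),
    Real.cos (Real.sqrt 3 / 2 * v) *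
      (Real.sin (Real.sqrt 3 / 2 * u) - Real.cos (Real.sqrt 3 / 2 * u)),
    Real.sin (Real.sqrt 3 / 2 * v) *
      (Real.sin (Real.sqrt 3 / 2 * u) - Real.cos (Real.sqrt 3 / 2 * u))⟩ : ℍ[ℝ])

/-- The flat Lagrangian torus immersion f(u,v,w) = (p(u,w), q(u,v)). -/
def fTor (u v w : ℝ) : ℍ[ℝ] × ℍ[ℝ] := (pTor u w, qTor u v)


def mkQ (a b c d : ℝ) : ℍ[ℝ] := ⟨a,b,c,d⟩

lemma innQ_mk (a b c d a' b' c' d' : ℝ) :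
    innQ (mkQ a b c d) (mkQ a' b' c' d') = a*a' + b*b' + c*c' + d*d' := by
  simp [innQ, Quaternion.re_mul]; simp [mkQ]

lemma mul_mk (a b c d a' b' c' d' : ℝ) :
    mkQ a b c d * mkQ a' b' c' d' =
    mkQ (a*a' - b*b' - c*c' - d*d') (a*b' + b*a' + c*d' - d*c')
        (a*c' - b*d' + c*a' + d*b') (a*d' + b*c' - c*b' + d*a') := by
  ext <;> simp [Quaternion.re_mul, Quaternion.imI_mul, Quaternion.imJ_mul, Quaternion.imK_mul] <;> simp [mkQ]

lemma star_mk (a b c d : ℝ) : star (mkQ a b c d) = mkQ a (-b) (-c) (-d) := by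
  ext <;> simp <;> simp [mkQ]

lemma smul_mk (r a b c d : ℝ) : r • mkQ a b c d = mkQ (r*a) (r*b) (r*c) (r*d) := by
  ext <;> simp <;> simp [mkQ]

lemma neg_mk (a b c d : ℝ) : -mkQ a b c d = mkQ (-a) (-b) (-c) (-d) := by
  ext <;> simp <;> simp [mkQ]

lemma add_mk (a b c d a' b' c' d' : ℝ) :
    mkQ a b c d + mkQ a' b' c' d' = mkQ (a+a') (b+b') (c+c') (d+d') := by
  ext <;> simp <;> simp [mkQ]

lemma sub_mk (a b c d a' b' c' d' : ℝ) :
    mkQ a b c d - mkQ a' b' c' d' = mkQ (a-a') (b-b') (c-c') (d-d') := by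
  ext <;> simp <;> simp [mkQ]

lemma two_mk : (2:ℍ[ℝ]) = mkQ 2 0 0 0 := by
  rw [show (2:ℍ[ℝ]) = 1+1 from one_add_one_eq_two.symm]
  ext <;> simp [mkQ] <;> norm_num

lemma fin3_mk2 (h : 2 < 3) : (⟨2,h⟩ : Fin 3) = 2 := rfl

lemma inv_mk (a b c d : ℝ) (h : a^2+b^2+c^2+d^2 = 1) :
    (mkQ a b c d)⁻¹ = mkQ a (-b) (-c) (-d) := by
  have hn : normSq (mkQ a b c d) = 1 := by
    simp [Quaternion.normSq_def']; simp [mkQ]; linarith [h]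
  have hinv : (mkQ a b c d)⁻¹ = (normSq (mkQ a b c d))⁻¹ • star (mkQ a b c d) := rfl
  rw [hinv, hn, star_mk]; simp

lemma norm_mk_one (a b c d : ℝ) (h : a^2+b^2+c^2+d^2 = 1) : ‖mkQ a b c d‖ = 1 := by
  have hn : normSq (mkQ a b c d) = 1 := by
    simp [Quaternion.normSq_def']; simp [mkQ]; linarith [h]
  have hnorm : ‖mkQ a b c d‖ = Real.sqrt (normSq (mkQ a b c d)) := rfl
  rw [hnorm, hn, Real.sqrt_one]

lemma hasDerivAt_mk {a b c d : ℝ → ℝ} {a' b' c' d' t : ℝ}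
    (ha : HasDerivAt a a' t) (hb : HasDerivAt b b' t)
    (hc : HasDerivAt c c' t) (hd : HasDerivAt d d' t) :
    HasDerivAt (fun s => mkQ (a s) (b s) (c s) (d s)) (mkQ a' b' c' d') t := by
  have key : ∀ x y z w : ℝ,
      mkQ x y z w = x • (1:ℍ[ℝ]) + y • mkQ 0 1 0 0 + z • mkQ 0 0 1 0 + w • mkQ 0 0 0 1 := by
    intro x y z w; ext <;> simp <;> simp [mkQ]
  have h := (((ha.smul_const (1:ℍ[ℝ])).add (hb.smul_const (mkQ 0 1 0 0))).add
      (hc.smul_const (mkQ 0 0 1 0))).add (hd.smul_const (mkQ 0 0 0 1))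
  change HasDerivAt (fun s => a s • (1:ℍ[ℝ]) + b s • mkQ 0 1 0 0 + c s • mkQ 0 0 1 0 + d s • mkQ 0 0 0 1) _ t at h
  rw [show (fun s => a s • (1:ℍ[ℝ]) + b s • mkQ 0 1 0 0 + c s • mkQ 0 0 1 0 + d s • mkQ 0 0 0 1)
      = (fun s => mkQ (a s) (b s) (c s) (d s)) from funext fun s => (key _ _ _ _).symm] at h
  rw [key a' b' c' d']
  exact h

set_option maxHeartbeats 4000000

/-- f maps into S³×S³, its partial derivatives form a g-orthonormal
triple, and f is a (flat) Lagrangian immersion. -/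
theorem stmt_19 (u v w : ℝ)
    (F : Fin 3 → ℍ[ℝ] × ℍ[ℝ])
    (hF : F = ![deriv (fun t => fTor t v w) u,
                deriv (fun t => fTor u t w) v,
                deriv (fun t => fTor u v t) w]) :
    (‖pTor u w‖ = 1 ∧ ‖qTor u v‖ = 1) ∧
    (∀ a b : Fin 3,
      gmet (pTor u w) (qTor u v) (F a) (F b) = if a = b then 1 else 0) ∧
    (∀ a b : Fin 3,
      gmet (pTor u w) (qTor u v) (F a) (Jmap (pTor u w) (qTor u v) (F b)) = 0) := by
  set r3 := Real.sqrt 3 with hr3def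
  set r2 := Real.sqrt 2 with hr2def
  set su := Real.sin (r3/2*u) with hsudef
  set cu := Real.cos (r3/2*u) with hcudef
  set sv := Real.sin (r3/2*v) with hsvdef
  set cv := Real.cos (r3/2*v) with hcvdef
  set sw := Real.sin (r3/2*w) with hswdef
  set cw := Real.cos (r3/2*w) with hcwdef
  have h2 : r2^2 = 2 := by rw [hr2def]; exact Real.sq_sqrt (by norm_num)
  have h3 : r3^2 = 3 := by rw [hr3def]; exact Real.sq_sqrt (by norm_num)
  have hr2pos : (0:ℝ) < r2 := by rw [hr2def]; positivity
  have hr3pos : (0:ℝ) < r3 := by rw [hr3def]; positivity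
  have hu : su^2+cu^2 = 1 := Real.sin_sq_add_cos_sq _
  have hv : sv^2+cv^2 = 1 := Real.sin_sq_add_cos_sq _
  have hw : sw^2+cw^2 = 1 := Real.sin_sq_add_cos_sq _
  have hq2 : r2⁻¹ = r2/2 := by
    rw [eq_div_iff (by norm_num : (2:ℝ) ≠ 0), inv_mul_eq_iff_eq_mul₀ hr2pos.ne']
    linear_combination -h2
  have hq3 : r3⁻¹ = r3/3 := by
    rw [eq_div_iff (by norm_num : (3:ℝ) ≠ 0), inv_mul_eq_iff_eq_mul₀ hr3pos.ne']
    linear_combination -h3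
  have hp : pTor u w = mkQ (cu*cw) (cu*sw) (su*cw) (su*sw) := rfl
  have hq : qTor u v = mkQ (r2/2*(cv*(su+cu))) (r2/2*(sv*(su+cu)))
      (r2/2*(cv*(su-cu))) (r2/2*(sv*(su-cu))) := by
    have h0 : qTor u v = r2⁻¹ • mkQ (cv*(su+cu)) (sv*(su+cu)) (cv*(su-cu)) (sv*(su-cu)) := rfl
    rw [h0, hq2, smul_mk]
  have hpinv : (mkQ (cu*cw) (cu*sw) (su*cw) (su*sw))⁻¹
      = mkQ (cu*cw) (-(cu*sw)) (-(su*cw)) (-(su*sw)) :=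
    inv_mk _ _ _ _ (by linear_combination (cw^2 + sw^2) * hu + (1) * hw)
  have hqinv : (mkQ (r2/2*(cv*(su+cu))) (r2/2*(sv*(su+cu)))
        (r2/2*(cv*(su-cu))) (r2/2*(sv*(su-cu))))⁻¹
      = mkQ (r2/2*(cv*(su+cu))) (-(r2/2*(sv*(su+cu))))
        (-(r2/2*(cv*(su-cu)))) (-(r2/2*(sv*(su-cu)))) :=
    inv_mk _ _ _ _ (by linear_combination ((1/2)*cu^2*cv^2 + (1/2)*cu^2*sv^2 + (1/2)*su^2*cv^2 + (1/2)*su^2*sv^2) * h2 + (cv^2 + sv^2) * hu + (1) * hv)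
  have hlin : HasDerivAt (fun s:ℝ => r3/2*s) (r3/2) u := by
    simpa using (hasDerivAt_id u).const_mul (r3/2)
  have hlin' : HasDerivAt (fun s:ℝ => r3/2*s) (r3/2) v := by
    simpa using (hasDerivAt_id v).const_mul (r3/2)
  have hlin'' : HasDerivAt (fun s:ℝ => r3/2*s) (r3/2) w := by
    simpa using (hasDerivAt_id w).const_mul (r3/2)
  have hdpu : HasDerivAt (fun t => pTor t w)
      (mkQ (r3/2*(-(su*cw))) (r3/2*(-(su*sw))) (r3/2*(cu*cw)) (r3/2*(cu*sw))) u := by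
    have h := hasDerivAt_mk (hlin.cos.mul_const cw) (hlin.cos.mul_const sw)
      (hlin.sin.mul_const cw) (hlin.sin.mul_const sw)
    have e : mkQ (-su*(r3/2)*cw) (-su*(r3/2)*sw) (cu*(r3/2)*cw) (cu*(r3/2)*sw)
        = mkQ (r3/2*(-(su*cw))) (r3/2*(-(su*sw))) (r3/2*(cu*cw)) (r3/2*(cu*sw)) := by
      ext <;> simp [mkQ] <;> ring
    exact e ▸ h
  have hdpw : HasDerivAt (fun t => pTor u t)
      (mkQ (r3/2*(-(cu*sw))) (r3/2*(cu*cw)) (r3/2*(-(su*sw))) (r3/2*(su*cw))) w := by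
    have h := hasDerivAt_mk ((hlin''.cos.const_mul cu)) ((hlin''.sin.const_mul cu))
      ((hlin''.cos.const_mul su)) ((hlin''.sin.const_mul su))
    have e : mkQ (cu*(-sw*(r3/2))) (cu*(cw*(r3/2))) (su*(-sw*(r3/2))) (su*(cw*(r3/2)))
        = mkQ (r3/2*(-(cu*sw))) (r3/2*(cu*cw)) (r3/2*(-(su*sw))) (r3/2*(su*cw)) := by
      ext <;> simp [mkQ] <;> ring
    exact e ▸ h
  have hdqu : HasDerivAt (fun t => qTor t v)
      (mkQ (r3/2*(r2/2)*(cv*(cu-su))) (r3/2*(r2/2)*(sv*(cu-su)))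
           (r3/2*(r2/2)*(cv*(cu+su))) (r3/2*(r2/2)*(sv*(cu+su)))) u := by
    have h := (hasDerivAt_mk (((hlin.sin.add hlin.cos).const_mul cv))
      (((hlin.sin.add hlin.cos).const_mul sv))
      (((hlin.sin.sub hlin.cos).const_mul cv))
      (((hlin.sin.sub hlin.cos).const_mul sv))).const_smul (r2⁻¹)
    have e : r2⁻¹ • mkQ (cv*(cu*(r3/2) + -su*(r3/2))) (sv*(cu*(r3/2) + -su*(r3/2)))
          (cv*(cu*(r3/2) - -su*(r3/2))) (sv*(cu*(r3/2) - -su*(r3/2)))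
        = mkQ (r3/2*(r2/2)*(cv*(cu-su))) (r3/2*(r2/2)*(sv*(cu-su)))
           (r3/2*(r2/2)*(cv*(cu+su))) (r3/2*(r2/2)*(sv*(cu+su))) := by
      rw [smul_mk, hq2]; ext <;> simp [mkQ] <;> ring
    exact e ▸ h
  have hdqv : HasDerivAt (fun t => qTor u t)
      (mkQ (r3/2*(r2/2)*(-(sv*(su+cu)))) (r3/2*(r2/2)*(cv*(su+cu)))
           (r3/2*(r2/2)*(-(sv*(su-cu)))) (r3/2*(r2/2)*(cv*(su-cu)))) v := by
    have h := (hasDerivAt_mk ((hlin'.cos.mul_const (su+cu))) ((hlin'.sin.mul_const (su+cu)))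
      ((hlin'.cos.mul_const (su-cu))) ((hlin'.sin.mul_const (su-cu)))).const_smul (r2⁻¹)
    have e : r2⁻¹ • mkQ (-sv*(r3/2)*(su+cu)) (cv*(r3/2)*(su+cu))
          (-sv*(r3/2)*(su-cu)) (cv*(r3/2)*(su-cu))
        = mkQ (r3/2*(r2/2)*(-(sv*(su+cu)))) (r3/2*(r2/2)*(cv*(su+cu)))
           (r3/2*(r2/2)*(-(sv*(su-cu)))) (r3/2*(r2/2)*(cv*(su-cu))) := by
      rw [smul_mk, hq2]; ext <;> simp [mkQ] <;> ring
    exact e ▸ h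
  have hD0 : deriv (fun t => fTor t v w) u
      = (mkQ (r3/2*(-(su*cw))) (r3/2*(-(su*sw))) (r3/2*(cu*cw)) (r3/2*(cu*sw)),
         mkQ (r3/2*(r2/2)*(cv*(cu-su))) (r3/2*(r2/2)*(sv*(cu-su)))
           (r3/2*(r2/2)*(cv*(cu+su))) (r3/2*(r2/2)*(sv*(cu+su)))) :=
    HasDerivAt.deriv (hdpu.prodMk hdqu)
  have hD1 : deriv (fun t => fTor u t w) v
      = (mkQ 0 0 0 0,
         mkQ (r3/2*(r2/2)*(-(sv*(su+cu)))) (r3/2*(r2/2)*(cv*(su+cu)))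
           (r3/2*(r2/2)*(-(sv*(su-cu)))) (r3/2*(r2/2)*(cv*(su-cu)))) := by
    have hz : (0:ℍ[ℝ]) = mkQ 0 0 0 0 := by ext <;> simp [mkQ]
    exact hz ▸ HasDerivAt.deriv ((hasDerivAt_const v (pTor u w)).prodMk hdqv)
  have hD2 : deriv (fun t => fTor u v t) w
      = (mkQ (r3/2*(-(cu*sw))) (r3/2*(cu*cw)) (r3/2*(-(su*sw))) (r3/2*(su*cw)),
         mkQ 0 0 0 0) := by
    have hz : (0:ℍ[ℝ]) = mkQ 0 0 0 0 := by ext <;> simp [mkQ]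
    exact hz ▸ HasDerivAt.deriv (hdpw.prodMk (hasDerivAt_const w (qTor u v)))
  subst hF
  have G00 : gmet (pTor u w) (qTor u v) (mkQ (r3/2*(-(su*cw))) (r3/2*(-(su*sw))) (r3/2*(cu*cw)) (r3/2*(cu*sw)), mkQ (r3/2*(r2/2)*(cv*(cu-su))) (r3/2*(r2/2)*(sv*(cu-su))) (r3/2*(r2/2)*(cv*(cu+su))) (r3/2*(r2/2)*(sv*(cu+su)))) (mkQ (r3/2*(-(su*cw))) (r3/2*(-(su*sw))) (r3/2*(cu*cw)) (r3/2*(cu*sw)), mkQ (r3/2*(r2/2)*(cv*(cu-su))) (r3/2*(r2/2)*(sv*(cu-su))) (r3/2*(r2/2)*(cv*(cu+su))) (r3/2*(r2/2)*(sv*(cu+su)))) = 1 := by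
    simp only [gmet, hp, hq, hpinv, hqinv, mul_mk, innQ_mk]
    linear_combination ((1/6)*r3^2*cu^2*cv^2 + (1/6)*r3^2*cu^2*sv^2 + (-1/6)*r3^2*cu^4*cv^2*cw^2 + (-1/6)*r3^2*cu^4*cv^2*sw^2 + (-1/6)*r3^2*cu^4*sv^2*cw^2 + (-1/6)*r3^2*cu^4*sv^2*sw^2 + (1/6)*r3^2*su^2*cv^2 + (1/6)*r3^2*su^2*sv^2 + (-1/3)*r3^2*su^2*cu^2*cv^2*cw^2 + (-1/3)*r3^2*su^2*cu^2*cv^2*sw^2 + (-1/3)*r3^2*su^2*cu^2*sv^2*cw^2 + (-1/3)*r3^2*su^2*cu^2*sv^2*sw^2 + (-1/6)*r3^2*su^4*cv^2*cw^2 + (-1/6)*r3^2*su^4*cv^2*sw^2 + (-1/6)*r3^2*su^4*sv^2*cw^2 + (-1/6)*r3^2*su^4*sv^2*sw^2) * h2 + ((1/3)*cu^2*cw^2 + (1/3)*cu^2*sw^2 + (1/3)*cu^2*cv^2 + (1/3)*cu^2*sv^2 + (-1/3)*cu^4*cv^2*cw^2 + (-1/3)*cu^4*cv^2*sw^2 +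 (-1/3)*cu^4*sv^2*cw^2 + (-1/3)*cu^4*sv^2*sw^2 + (1/3)*su^2*cw^2 + (1/3)*su^2*sw^2 + (1/3)*su^2*cv^2 + (1/3)*su^2*sv^2 + (-2/3)*su^2*cu^2*cv^2*cw^2 + (-2/3)*su^2*cu^2*cv^2*sw^2 + (-2/3)*su^2*cu^2*sv^2*cw^2 + (-2/3)*su^2*cu^2*sv^2*sw^2 + (-1/3)*su^4*cv^2*cw^2 + (-1/3)*su^4*cv^2*sw^2 + (-1/3)*su^4*sv^2*cw^2 + (-1/3)*su^4*sv^2*sw^2) * h3 + ((-1) + cw^2 + sw^2 + cv^2 + sv^2 + cu^2 + (-2)*cu^2*cv^2*cw^2 + (-2)*cu^2*cv^2*sw^2 + (-2)*cu^2*sv^2*cw^2 + (-2)*cu^2*sv^2*sw^2 + (-1)*su^2*cv^2*cw^2 + (-1)*su^2*cv^2*sw^2 + (-1)*su^2*sv^2*cw^2 + (-1)*su^2*sv^2*sw^2) * hu + (1 + (-2)*cu^2*cw^2 + (-2)*cu^2*sw^2 + cu^4*cw^2 + cu^4*sw^2 + (-1)*su^2*cw^2 + (-1)*su^2*sw^2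 + su^2*cu^2*cw^2 + su^2*cu^2*sw^2) * hv + (1 + (-2)*cu^2 + cu^4 + (-1)*su^2 + su^2*cu^2) * hw
  have G01 : gmet (pTor u w) (qTor u v) (mkQ (r3/2*(-(su*cw))) (r3/2*(-(su*sw))) (r3/2*(cu*cw)) (r3/2*(cu*sw)), mkQ (r3/2*(r2/2)*(cv*(cu-su))) (r3/2*(r2/2)*(sv*(cu-su))) (r3/2*(r2/2)*(cv*(cu+su))) (r3/2*(r2/2)*(sv*(cu+su)))) (mkQ 0 0 0 0, mkQ (r3/2*(r2/2)*(-(sv*(su+cu)))) (r3/2*(r2/2)*(cv*(su+cu))) (r3/2*(r2/2)*(-(sv*(su-cu)))) (r3/2*(r2/2)*(cv*(su-cu)))) = 0 := by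
    simp only [gmet, hp, hq, hpinv, hqinv, mul_mk, innQ_mk]
    linear_combination (0:ℝ)
  have G02 : gmet (pTor u w) (qTor u v) (mkQ (r3/2*(-(su*cw))) (r3/2*(-(su*sw))) (r3/2*(cu*cw)) (r3/2*(cu*sw)), mkQ (r3/2*(r2/2)*(cv*(cu-su))) (r3/2*(r2/2)*(sv*(cu-su))) (r3/2*(r2/2)*(cv*(cu+su))) (r3/2*(r2/2)*(sv*(cu+su)))) (mkQ (r3/2*(-(cu*sw))) (r3/2*(cu*cw)) (r3/2*(-(su*sw))) (r3/2*(su*cw)), mkQ 0 0 0 0) = 0 := by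
    simp only [gmet, hp, hq, hpinv, hqinv, mul_mk, innQ_mk]
    linear_combination (0:ℝ)
  have G10 : gmet (pTor u w) (qTor u v) (mkQ 0 0 0 0, mkQ (r3/2*(r2/2)*(-(sv*(su+cu)))) (r3/2*(r2/2)*(cv*(su+cu))) (r3/2*(r2/2)*(-(sv*(su-cu)))) (r3/2*(r2/2)*(cv*(su-cu)))) (mkQ (r3/2*(-(su*cw))) (r3/2*(-(su*sw))) (r3/2*(cu*cw)) (r3/2*(cu*sw)), mkQ (r3/2*(r2/2)*(cv*(cu-su))) (r3/2*(r2/2)*(sv*(cu-su))) (r3/2*(r2/2)*(cv*(cu+su))) (r3/2*(r2/2)*(sv*(cu+su)))) = 0 := by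
    simp only [gmet, hp, hq, hpinv, hqinv, mul_mk, innQ_mk]
    linear_combination (0:ℝ)
  have G11 : gmet (pTor u w) (qTor u v) (mkQ 0 0 0 0, mkQ (r3/2*(r2/2)*(-(sv*(su+cu)))) (r3/2*(r2/2)*(cv*(su+cu))) (r3/2*(r2/2)*(-(sv*(su-cu)))) (r3/2*(r2/2)*(cv*(su-cu)))) (mkQ 0 0 0 0, mkQ (r3/2*(r2/2)*(-(sv*(su+cu)))) (r3/2*(r2/2)*(cv*(su+cu))) (r3/2*(r2/2)*(-(sv*(su-cu)))) (r3/2*(r2/2)*(cv*(su-cu)))) = 1 := by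
    simp only [gmet, hp, hq, hpinv, hqinv, mul_mk, innQ_mk]
    linear_combination ((1/6)*r3^2*cu^2*cv^2 + (1/6)*r3^2*cu^2*sv^2 + (1/6)*r3^2*su^2*cv^2 + (1/6)*r3^2*su^2*sv^2) * h2 + ((1/3)*cu^2*cv^2 + (1/3)*cu^2*sv^2 + (1/3)*su^2*cv^2 + (1/3)*su^2*sv^2) * h3 + (cv^2 + sv^2) * hu + (1) * hv
  have G12 : gmet (pTor u w) (qTor u v) (mkQ 0 0 0 0, mkQ (r3/2*(r2/2)*(-(sv*(su+cu)))) (r3/2*(r2/2)*(cv*(su+cu))) (r3/2*(r2/2)*(-(sv*(su-cu)))) (r3/2*(r2/2)*(cv*(su-cu)))) (mkQ (r3/2*(-(cu*sw))) (r3/2*(cu*cw)) (r3/2*(-(su*sw))) (r3/2*(su*cw)), mkQ 0 0 0 0) = 0 := by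
    simp only [gmet, hp, hq, hpinv, hqinv, mul_mk, innQ_mk]
    linear_combination (0:ℝ)
  have G20 : gmet (pTor u w) (qTor u v) (mkQ (r3/2*(-(cu*sw))) (r3/2*(cu*cw)) (r3/2*(-(su*sw))) (r3/2*(su*cw)), mkQ 0 0 0 0) (mkQ (r3/2*(-(su*cw))) (r3/2*(-(su*sw))) (r3/2*(cu*cw)) (r3/2*(cu*sw)), mkQ (r3/2*(r2/2)*(cv*(cu-su))) (r3/2*(r2/2)*(sv*(cu-su))) (r3/2*(r2/2)*(cv*(cu+su))) (r3/2*(r2/2)*(sv*(cu+su)))) = 0 := by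
    simp only [gmet, hp, hq, hpinv, hqinv, mul_mk, innQ_mk]
    linear_combination (0:ℝ)
  have G21 : gmet (pTor u w) (qTor u v) (mkQ (r3/2*(-(cu*sw))) (r3/2*(cu*cw)) (r3/2*(-(su*sw))) (r3/2*(su*cw)), mkQ 0 0 0 0) (mkQ 0 0 0 0, mkQ (r3/2*(r2/2)*(-(sv*(su+cu)))) (r3/2*(r2/2)*(cv*(su+cu))) (r3/2*(r2/2)*(-(sv*(su-cu)))) (r3/2*(r2/2)*(cv*(su-cu)))) = 0 := by
    simp only [gmet, hp, hq, hpinv, hqinv, mul_mk, innQ_mk]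
    linear_combination (0:ℝ)
  have G22 : gmet (pTor u w) (qTor u v) (mkQ (r3/2*(-(cu*sw))) (r3/2*(cu*cw)) (r3/2*(-(su*sw))) (r3/2*(su*cw)), mkQ 0 0 0 0) (mkQ (r3/2*(-(cu*sw))) (r3/2*(cu*cw)) (r3/2*(-(su*sw))) (r3/2*(su*cw)), mkQ 0 0 0 0) = 1 := by
    simp only [gmet, hp, hq, hpinv, hqinv, mul_mk, innQ_mk]
    linear_combination ((1/3)*cu^2*cw^2 + (1/3)*cu^2*sw^2 + (1/3)*su^2*cw^2 + (1/3)*su^2*sw^2) * h3 + (cw^2 + sw^2) * hu + (1) * hw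
  have J00 : gmet (pTor u w) (qTor u v) (mkQ (r3/2*(-(su*cw))) (r3/2*(-(su*sw))) (r3/2*(cu*cw)) (r3/2*(cu*sw)), mkQ (r3/2*(r2/2)*(cv*(cu-su))) (r3/2*(r2/2)*(sv*(cu-su))) (r3/2*(r2/2)*(cv*(cu+su))) (r3/2*(r2/2)*(sv*(cu+su)))) (Jmap (pTor u w) (qTor u v) (mkQ (r3/2*(-(su*cw))) (r3/2*(-(su*sw))) (r3/2*(cu*cw)) (r3/2*(cu*sw)), mkQ (r3/2*(r2/2)*(cv*(cu-su))) (r3/2*(r2/2)*(sv*(cu-su))) (r3/2*(r2/2)*(cv*(cu+su))) (r3/2*(r2/2)*(sv*(cu+su))))) = 0 := by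
    simp only [gmet, Jmap, ← hr3def, hq3, hp, hq, hpinv, hqinv, Prod.smul_mk, two_mk, smul_mk, mul_mk, neg_mk, add_mk, sub_mk, innQ_mk]
    linear_combination ((-1)*r3*cu^4*cv^2 + (1/2)*r3*cu^4*cv^4 + (-1/2)*r3*cu^4*sv^2 + (1/2)*r3*cu^4*sv^2*cv^2 + (2/3)*r3*cu^6*cv^2 + (-1/3)*r3*cu^6*cv^4 + (1/3)*r3*cu^6*sv^2 + (-1/3)*r3*cu^6*sv^2*cv^2 + (-1)*r3*su^2*cu^2*cv^2 + (1/2)*r3*su^2*cu^2*cv^4 + (-1/2)*r3*su^2*cu^2*sv^2 + (1/2)*r3*su^2*cu^2*sv^2*cv^2 + r3*su^2*cu^4*cv^2 + (-1/2)*r3*su^2*cu^4*cv^4 + (1/2)*r3*su^2*cu^4*sv^2 + (-1/2)*r3*su^2*cu^4*sv^2*cv^2 + (-1/3)*r3*su^4*cv^2 + (1/6)*r3*su^4*cv^4 + (-1/6)*r3*su^4*sv^2 + (1/6)*r3*su^4*sv^2*cv^2 + (1/3)*r3*su^4*cu^2*cv^2 + (-1/6)*r3*su^4*cu^2*cv^4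 + (1/6)*r3*su^4*cu^2*sv^2 + (-1/6)*r3*su^4*cu^2*sv^2*cv^2 + (1/18)*r3^3*cu^2*cv^2 + (1/18)*r3^3*cu^2*sv^2 + (1/18)*r3^3*cu^6*cv^2*cw^4 + (1/9)*r3^3*cu^6*cv^2*sw^2*cw^2 + (1/18)*r3^3*cu^6*cv^2*sw^4 + (1/18)*r3^3*cu^6*sv^2*cw^4 + (1/9)*r3^3*cu^6*sv^2*sw^2*cw^2 + (1/18)*r3^3*cu^6*sv^2*sw^4 + (1/18)*r3^3*su^2*cv^2 + (1/18)*r3^3*su^2*sv^2 + (1/6)*r3^3*su^2*cu^4*cv^2*cw^4 + (1/3)*r3^3*su^2*cu^4*cv^2*sw^2*cw^2 + (1/6)*r3^3*su^2*cu^4*cv^2*sw^4 + (1/6)*r3^3*su^2*cu^4*sv^2*cw^4 + (1/3)*r3^3*su^2*cu^4*sv^2*sw^2*cw^2 + (1/6)*r3^3*su^2*cu^4*sv^2*sw^4 + (1/6)*r3^3*su^4*cu^2*cv^2*cw^4 + (1/3)*r3^3*su^4*cu^2*cv^2*sw^2*cw^2 + (1/6)*r3^3*su^4*cu^2*cv^2*sw^4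 + (1/6)*r3^3*su^4*cu^2*sv^2*cw^4 + (1/3)*r3^3*su^4*cu^2*sv^2*sw^2*cw^2 + (1/6)*r3^3*su^4*cu^2*sv^2*sw^4 + (1/18)*r3^3*su^6*cv^2*cw^4 + (1/9)*r3^3*su^6*cv^2*sw^2*cw^2 + (1/18)*r3^3*su^6*cv^2*sw^4 + (1/18)*r3^3*su^6*sv^2*cw^4 + (1/9)*r3^3*su^6*sv^2*sw^2*cw^2 + (1/18)*r3^3*su^6*sv^2*sw^4 + (-1/36)*r2^2*r3^3*cu^6*cv^4*cw^2 + (-1/36)*r2^2*r3^3*cu^6*cv^4*sw^2 + (-1/18)*r2^2*r3^3*cu^6*sv^2*cv^2*cw^2 + (-1/18)*r2^2*r3^3*cu^6*sv^2*cv^2*sw^2 + (-1/36)*r2^2*r3^3*cu^6*sv^4*cw^2 + (-1/36)*r2^2*r3^3*cu^6*sv^4*sw^2 + (-1/12)*r2^2*r3^3*su^2*cu^4*cv^4*cw^2 + (-1/12)*r2^2*r3^3*su^2*cu^4*cv^4*sw^2 + (-1/6)*r2^2*r3^3*su^2*cu^4*sv^2*cv^2*cw^2 + (-1/6)*r2^2*r3^3*su^2*cu^4*sv^2*cv^2*sw^2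 + (-1/12)*r2^2*r3^3*su^2*cu^4*sv^4*cw^2 + (-1/12)*r2^2*r3^3*su^2*cu^4*sv^4*sw^2 + (-1/12)*r2^2*r3^3*su^4*cu^2*cv^4*cw^2 + (-1/12)*r2^2*r3^3*su^4*cu^2*cv^4*sw^2 + (-1/6)*r2^2*r3^3*su^4*cu^2*sv^2*cv^2*cw^2 + (-1/6)*r2^2*r3^3*su^4*cu^2*sv^2*cv^2*sw^2 + (-1/12)*r2^2*r3^3*su^4*cu^2*sv^4*cw^2 + (-1/12)*r2^2*r3^3*su^4*cu^2*sv^4*sw^2 + (-1/36)*r2^2*r3^3*su^6*cv^4*cw^2 + (-1/36)*r2^2*r3^3*su^6*cv^4*sw^2 + (-1/18)*r2^2*r3^3*su^6*sv^2*cv^2*cw^2 + (-1/18)*r2^2*r3^3*su^6*sv^2*cv^2*sw^2 + (-1/36)*r2^2*r3^3*su^6*sv^4*cw^2 + (-1/36)*r2^2*r3^3*su^6*sv^4*sw^2) * h2 + ((-1/9)*r3*cu^2*cw^2 + (-1/9)*r3*cu^2*sw^2 + (1/9)*r3*cu^2*cv^2 + (1/9)*r3*cu^2*sv^2 + (1/9)*r3*cu^6*cv^2*cw^4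 + (2/9)*r3*cu^6*cv^2*sw^2*cw^2 + (1/9)*r3*cu^6*cv^2*sw^4 + (1/9)*r3*cu^6*sv^2*cw^4 + (2/9)*r3*cu^6*sv^2*sw^2*cw^2 + (1/9)*r3*cu^6*sv^2*sw^4 + (-1/9)*r3*su^2*cw^2 + (-1/9)*r3*su^2*sw^2 + (1/9)*r3*su^2*cv^2 + (1/9)*r3*su^2*sv^2 + (1/3)*r3*su^2*cu^4*cv^2*cw^4 + (2/3)*r3*su^2*cu^4*cv^2*sw^2*cw^2 + (1/3)*r3*su^2*cu^4*cv^2*sw^4 + (1/3)*r3*su^2*cu^4*sv^2*cw^4 + (2/3)*r3*su^2*cu^4*sv^2*sw^2*cw^2 + (1/3)*r3*su^2*cu^4*sv^2*sw^4 + (1/3)*r3*su^4*cu^2*cv^2*cw^4 + (2/3)*r3*su^4*cu^2*cv^2*sw^2*cw^2 + (1/3)*r3*su^4*cu^2*cv^2*sw^4 + (1/3)*r3*su^4*cu^2*sv^2*cw^4 + (2/3)*r3*su^4*cu^2*sv^2*sw^2*cw^2 + (1/3)*r3*su^4*cu^2*sv^2*sw^4 + (1/9)*r3*su^6*cv^2*cw^4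 + (2/9)*r3*su^6*cv^2*sw^2*cw^2 + (1/9)*r3*su^6*cv^2*sw^4 + (1/9)*r3*su^6*sv^2*cw^4 + (2/9)*r3*su^6*sv^2*sw^2*cw^2 + (1/9)*r3*su^6*sv^2*sw^4 + (-1/18)*r2^2*r3*cu^6*cv^4*cw^2 + (-1/18)*r2^2*r3*cu^6*cv^4*sw^2 + (-1/9)*r2^2*r3*cu^6*sv^2*cv^2*cw^2 + (-1/9)*r2^2*r3*cu^6*sv^2*cv^2*sw^2 + (-1/18)*r2^2*r3*cu^6*sv^4*cw^2 + (-1/18)*r2^2*r3*cu^6*sv^4*sw^2 + (-1/6)*r2^2*r3*su^2*cu^4*cv^4*cw^2 + (-1/6)*r2^2*r3*su^2*cu^4*cv^4*sw^2 + (-1/3)*r2^2*r3*su^2*cu^4*sv^2*cv^2*cw^2 + (-1/3)*r2^2*r3*su^2*cu^4*sv^2*cv^2*sw^2 + (-1/6)*r2^2*r3*su^2*cu^4*sv^4*cw^2 + (-1/6)*r2^2*r3*su^2*cu^4*sv^4*sw^2 + (-1/6)*r2^2*r3*su^4*cu^2*cv^4*cw^2 + (-1/6)*r2^2*r3*su^4*cu^2*cv^4*sw^2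 + (-1/3)*r2^2*r3*su^4*cu^2*sv^2*cv^2*cw^2 + (-1/3)*r2^2*r3*su^4*cu^2*sv^2*cv^2*sw^2 + (-1/6)*r2^2*r3*su^4*cu^2*sv^4*cw^2 + (-1/6)*r2^2*r3*su^4*cu^2*sv^4*sw^2 + (-1/18)*r2^2*r3*su^6*cv^4*cw^2 + (-1/18)*r2^2*r3*su^6*cv^4*sw^2 + (-1/9)*r2^2*r3*su^6*sv^2*cv^2*cw^2 + (-1/9)*r2^2*r3*su^6*sv^2*cv^2*sw^2 + (-1/18)*r2^2*r3*su^6*sv^4*cw^2 + (-1/18)*r2^2*r3*su^6*sv^4*sw^2) * h3 + ((-1/3)*r3*cw^2 + (-1/3)*r3*sw^2 + (1/3)*r3*cv^2 + (1/3)*r3*sv^2 + 2*r3*cu^2*cw^2 + (-1)*r3*cu^2*cw^4 + r3*cu^2*sw^2 + (-1)*r3*cu^2*sw^2*cw^2 + (-2)*r3*cu^2*cv^2 + r3*cu^2*cv^4 + (-1)*r3*cu^2*sv^2 + r3*cu^2*sv^2*cv^2 + 2*r3*cu^4*cv^2 + (-1)*r3*cu^4*cv^4 + r3*cu^4*sv^2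 + (-1)*r3*cu^4*sv^2*cv^2 + (2/3)*r3*su^2*cw^2 + (-1/3)*r3*su^2*cw^4 + (1/3)*r3*su^2*sw^2 + (-1/3)*r3*su^2*sw^2*cw^2 + (-2/3)*r3*su^2*cv^2 + (1/3)*r3*su^2*cv^4 + (-1/3)*r3*su^2*sv^2 + (1/3)*r3*su^2*sv^2*cv^2 + (-2/3)*r3*su^2*cu^2*cw^2 + (1/3)*r3*su^2*cu^2*cw^4 + (-1/3)*r3*su^2*cu^2*sw^2 + (1/3)*r3*su^2*cu^2*sw^2*cw^2 + (2/3)*r3*su^2*cu^2*cv^2 + r3*su^2*cu^2*cv^2*cw^4 + 2*r3*su^2*cu^2*cv^2*sw^2*cw^2 + r3*su^2*cu^2*cv^2*sw^4 + (-1/3)*r3*su^2*cu^2*cv^4 + (1/3)*r3*su^2*cu^2*sv^2 + r3*su^2*cu^2*sv^2*cw^4 + 2*r3*su^2*cu^2*sv^2*sw^2*cw^2 + r3*su^2*cu^2*sv^2*sw^4 + (-1/3)*r3*su^2*cu^2*sv^2*cv^2 + (1/3)*r3*su^4*cv^2*cw^4 + (2/3)*r3*su^4*cv^2*sw^2*cw^2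 + (1/3)*r3*su^4*cv^2*sw^4 + (1/3)*r3*su^4*sv^2*cw^4 + (2/3)*r3*su^4*sv^2*sw^2*cw^2 + (1/3)*r3*su^4*sv^2*sw^4 + (-1/2)*r2^2*r3*cu^4*cv^4*cw^2 + (-1/2)*r2^2*r3*cu^4*cv^4*sw^2 + (-1)*r2^2*r3*cu^4*sv^2*cv^2*cw^2 + (-1)*r2^2*r3*cu^4*sv^2*cv^2*sw^2 + (-1/2)*r2^2*r3*cu^4*sv^4*cw^2 + (-1/2)*r2^2*r3*cu^4*sv^4*sw^2 + (-1/2)*r2^2*r3*su^2*cu^2*cv^4*cw^2 + (-1/2)*r2^2*r3*su^2*cu^2*cv^4*sw^2 + (-1)*r2^2*r3*su^2*cu^2*sv^2*cv^2*cw^2 + (-1)*r2^2*r3*su^2*cu^2*sv^2*cv^2*sw^2 + (-1/2)*r2^2*r3*su^2*cu^2*sv^4*cw^2 + (-1/2)*r2^2*r3*su^2*cu^2*sv^4*sw^2 + (-1/6)*r2^2*r3*su^4*cv^4*cw^2 + (-1/6)*r2^2*r3*su^4*cv^4*sw^2 + (-1/3)*r2^2*r3*su^4*sv^2*cv^2*cw^2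 + (-1/3)*r2^2*r3*su^4*sv^2*cv^2*sw^2 + (-1/6)*r2^2*r3*su^4*sv^4*cw^2 + (-1/6)*r2^2*r3*su^4*sv^4*sw^2) * hu + ((1/3)*r3 + (-1)*r3*cu^2 + r3*cu^2*cv^2 + r3*cu^4 + (-1)*r3*cu^4*cv^2 + (-1/3)*r3*cu^6 + (1/3)*r3*cu^6*cw^4 + (2/3)*r3*cu^6*sw^2*cw^2 + (1/3)*r3*cu^6*sw^4 + (1/3)*r3*cu^6*cv^2 + (-1/3)*r3*su^2 + (1/3)*r3*su^2*cv^2 + (2/3)*r3*su^2*cu^2 + r3*su^2*cu^2*cw^4 + 2*r3*su^2*cu^2*sw^2*cw^2 + r3*su^2*cu^2*sw^4 + (-2/3)*r3*su^2*cu^2*cv^2 + (-1/3)*r3*su^2*cu^4 + (1/3)*r3*su^2*cu^4*cv^2 + (1/3)*r3*su^4*cw^4 + (2/3)*r3*su^4*sw^2*cw^2 + (1/3)*r3*su^4*sw^4 + (-1/3)*r3*su^4*cu^2*cw^4 + (-2/3)*r3*su^4*cu^2*sw^2*cw^2 + (-1/3)*r3*su^4*cu^2*sw^4 + (-1)*r2^2*r3*cu^4*cv^2*cw^2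 + (-1)*r2^2*r3*cu^4*cv^2*sw^2 + (-1/2)*r2^2*r3*cu^4*sv^2*cw^2 + (-1/2)*r2^2*r3*cu^4*sv^2*sw^2 + (2/3)*r2^2*r3*cu^6*cv^2*cw^2 + (2/3)*r2^2*r3*cu^6*cv^2*sw^2 + (1/3)*r2^2*r3*cu^6*sv^2*cw^2 + (1/3)*r2^2*r3*cu^6*sv^2*sw^2 + (-1)*r2^2*r3*su^2*cu^2*cv^2*cw^2 + (-1)*r2^2*r3*su^2*cu^2*cv^2*sw^2 + (-1/2)*r2^2*r3*su^2*cu^2*sv^2*cw^2 + (-1/2)*r2^2*r3*su^2*cu^2*sv^2*sw^2 + r2^2*r3*su^2*cu^4*cv^2*cw^2 + r2^2*r3*su^2*cu^4*cv^2*sw^2 + (1/2)*r2^2*r3*su^2*cu^4*sv^2*cw^2 + (1/2)*r2^2*r3*su^2*cu^4*sv^2*sw^2 + (-1/3)*r2^2*r3*su^4*cv^2*cw^2 + (-1/3)*r2^2*r3*su^4*cv^2*sw^2 + (-1/6)*r2^2*r3*su^4*sv^2*cw^2 + (-1/6)*r2^2*r3*su^4*sv^2*sw^2 + (1/3)*r2^2*r3*su^4*cu^2*cv^2*cw^2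 + (1/3)*r2^2*r3*su^4*cu^2*cv^2*sw^2 + (1/6)*r2^2*r3*su^4*cu^2*sv^2*cw^2 + (1/6)*r2^2*r3*su^4*cu^2*sv^2*sw^2) * hv + ((-1/3)*r3 + r3*cu^2 + (-1)*r3*cu^2*cw^2 + (-1)*r3*cu^4 + r3*cu^4*cw^2 + (1/3)*r3*cu^6 + (1/3)*r3*cu^6*cw^2 + (1/3)*r3*cu^6*sw^2 + (1/3)*r3*su^2 + (-1/3)*r3*su^2*cw^2 + (-2/3)*r3*su^2*cu^2 + (8/3)*r3*su^2*cu^2*cw^2 + r3*su^2*cu^2*sw^2 + (1/3)*r3*su^2*cu^4 + (-1/3)*r3*su^2*cu^4*cw^2 + (2/3)*r3*su^4*cw^2 + (1/3)*r3*su^4*sw^2 + (-2/3)*r3*su^4*cu^2*cw^2 + (-1/3)*r3*su^4*cu^2*sw^2 + (-1)*r2^2*r3*cu^4*cv^2 + (1/2)*r2^2*r3*cu^4*cv^4 + (-1/2)*r2^2*r3*cu^4*sv^2 + (1/2)*r2^2*r3*cu^4*sv^2*cv^2 + (2/3)*r2^2*r3*cu^6*cv^2 + (-1/3)*r2^2*r3*cu^6*cv^4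 + (1/3)*r2^2*r3*cu^6*sv^2 + (-1/3)*r2^2*r3*cu^6*sv^2*cv^2 + (-1)*r2^2*r3*su^2*cu^2*cv^2 + (1/2)*r2^2*r3*su^2*cu^2*cv^4 + (-1/2)*r2^2*r3*su^2*cu^2*sv^2 + (1/2)*r2^2*r3*su^2*cu^2*sv^2*cv^2 + r2^2*r3*su^2*cu^4*cv^2 + (-1/2)*r2^2*r3*su^2*cu^4*cv^4 + (1/2)*r2^2*r3*su^2*cu^4*sv^2 + (-1/2)*r2^2*r3*su^2*cu^4*sv^2*cv^2 + (-1/3)*r2^2*r3*su^4*cv^2 + (1/6)*r2^2*r3*su^4*cv^4 + (-1/6)*r2^2*r3*su^4*sv^2 + (1/6)*r2^2*r3*su^4*sv^2*cv^2 + (1/3)*r2^2*r3*su^4*cu^2*cv^2 + (-1/6)*r2^2*r3*su^4*cu^2*cv^4 + (1/6)*r2^2*r3*su^4*cu^2*sv^2 + (-1/6)*r2^2*r3*su^4*cu^2*sv^2*cv^2) * hw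
  have J01 : gmet (pTor u w) (qTor u v) (mkQ (r3/2*(-(su*cw))) (r3/2*(-(su*sw))) (r3/2*(cu*cw)) (r3/2*(cu*sw)), mkQ (r3/2*(r2/2)*(cv*(cu-su))) (r3/2*(r2/2)*(sv*(cu-su))) (r3/2*(r2/2)*(cv*(cu+su))) (r3/2*(r2/2)*(sv*(cu+su)))) (Jmap (pTor u w) (qTor u v) (mkQ 0 0 0 0, mkQ (r3/2*(r2/2)*(-(sv*(su+cu)))) (r3/2*(r2/2)*(cv*(su+cu))) (r3/2*(r2/2)*(-(sv*(su-cu)))) (r3/2*(r2/2)*(cv*(su-cu))))) = 0 := by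
    simp only [gmet, Jmap, ← hr3def, hq3, hp, hq, hpinv, hqinv, Prod.smul_mk, two_mk, smul_mk, mul_mk, neg_mk, add_mk, sub_mk, innQ_mk]
    linear_combination (0:ℝ)
  have J02 : gmet (pTor u w) (qTor u v) (mkQ (r3/2*(-(su*cw))) (r3/2*(-(su*sw))) (r3/2*(cu*cw)) (r3/2*(cu*sw)), mkQ (r3/2*(r2/2)*(cv*(cu-su))) (r3/2*(r2/2)*(sv*(cu-su))) (r3/2*(r2/2)*(cv*(cu+su))) (r3/2*(r2/2)*(sv*(cu+su)))) (Jmap (pTor u w) (qTor u v) (mkQ (r3/2*(-(cu*sw))) (r3/2*(cu*cw)) (r3/2*(-(su*sw))) (r3/2*(su*cw)), mkQ 0 0 0 0)) = 0 := by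
    simp only [gmet, Jmap, ← hr3def, hq3, hp, hq, hpinv, hqinv, Prod.smul_mk, two_mk, smul_mk, mul_mk, neg_mk, add_mk, sub_mk, innQ_mk]
    linear_combination (0:ℝ)
  have J10 : gmet (pTor u w) (qTor u v) (mkQ 0 0 0 0, mkQ (r3/2*(r2/2)*(-(sv*(su+cu)))) (r3/2*(r2/2)*(cv*(su+cu))) (r3/2*(r2/2)*(-(sv*(su-cu)))) (r3/2*(r2/2)*(cv*(su-cu)))) (Jmap (pTor u w) (qTor u v) (mkQ (r3/2*(-(su*cw))) (r3/2*(-(su*sw))) (r3/2*(cu*cw)) (r3/2*(cu*sw)), mkQ (r3/2*(r2/2)*(cv*(cu-su))) (r3/2*(r2/2)*(sv*(cu-su))) (r3/2*(r2/2)*(cv*(cu+su))) (r3/2*(r2/2)*(sv*(cu+su))))) = 0 := by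
    simp only [gmet, Jmap, ← hr3def, hq3, hp, hq, hpinv, hqinv, Prod.smul_mk, two_mk, smul_mk, mul_mk, neg_mk, add_mk, sub_mk, innQ_mk]
    linear_combination (0:ℝ)
  have J11 : gmet (pTor u w) (qTor u v) (mkQ 0 0 0 0, mkQ (r3/2*(r2/2)*(-(sv*(su+cu)))) (r3/2*(r2/2)*(cv*(su+cu))) (r3/2*(r2/2)*(-(sv*(su-cu)))) (r3/2*(r2/2)*(cv*(su-cu)))) (Jmap (pTor u w) (qTor u v) (mkQ 0 0 0 0, mkQ (r3/2*(r2/2)*(-(sv*(su+cu)))) (r3/2*(r2/2)*(cv*(su+cu))) (r3/2*(r2/2)*(-(sv*(su-cu)))) (r3/2*(r2/2)*(cv*(su-cu))))) = 0 := by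
    simp only [gmet, Jmap, ← hr3def, hq3, hp, hq, hpinv, hqinv, Prod.smul_mk, two_mk, smul_mk, mul_mk, neg_mk, add_mk, sub_mk, innQ_mk]
    linear_combination ((-1)*r3*cu^4*cv^2 + (1/2)*r3*cu^4*cv^4 + (-1/2)*r3*cu^4*sv^2 + (1/2)*r3*cu^4*sv^2*cv^2 + (2/3)*r3*cu^6*cv^2 + (-1/3)*r3*cu^6*cv^4 + (1/3)*r3*cu^6*sv^2 + (-1/3)*r3*cu^6*sv^2*cv^2 + (-1)*r3*su^2*cu^2*cv^2 + (1/2)*r3*su^2*cu^2*cv^4 + (-1/2)*r3*su^2*cu^2*sv^2 + (1/2)*r3*su^2*cu^2*sv^2*cv^2 + r3*su^2*cu^4*cv^2 + (-1/2)*r3*su^2*cu^4*cv^4 + (1/2)*r3*su^2*cu^4*sv^2 + (-1/2)*r3*su^2*cu^4*sv^2*cv^2 + (-1/3)*r3*su^4*cv^2 + (1/6)*r3*su^4*cv^4 + (-1/6)*r3*su^4*sv^2 + (1/6)*r3*su^4*sv^2*cv^2 + (1/3)*r3*su^4*cu^2*cv^2 + (-1/6)*r3*su^4*cu^2*cv^4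 + (1/6)*r3*su^4*cu^2*sv^2 + (-1/6)*r3*su^4*cu^2*sv^2*cv^2 + (1/18)*r3^3*cu^2*cv^2 + (1/18)*r3^3*cu^2*sv^2 + (1/18)*r3^3*su^2*cv^2 + (1/18)*r3^3*su^2*sv^2 + (-1/36)*r2^2*r3^3*cu^6*cv^4*cw^2 + (-1/36)*r2^2*r3^3*cu^6*cv^4*sw^2 + (-1/18)*r2^2*r3^3*cu^6*sv^2*cv^2*cw^2 + (-1/18)*r2^2*r3^3*cu^6*sv^2*cv^2*sw^2 + (-1/36)*r2^2*r3^3*cu^6*sv^4*cw^2 + (-1/36)*r2^2*r3^3*cu^6*sv^4*sw^2 + (-1/12)*r2^2*r3^3*su^2*cu^4*cv^4*cw^2 + (-1/12)*r2^2*r3^3*su^2*cu^4*cv^4*sw^2 + (-1/6)*r2^2*r3^3*su^2*cu^4*sv^2*cv^2*cw^2 + (-1/6)*r2^2*r3^3*su^2*cu^4*sv^2*cv^2*sw^2 + (-1/12)*r2^2*r3^3*su^2*cu^4*sv^4*cw^2 + (-1/12)*r2^2*r3^3*su^2*cu^4*sv^4*sw^2 + (-1/12)*r2^2*r3^3*su^4*cu^2*cv^4*cw^2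 + (-1/12)*r2^2*r3^3*su^4*cu^2*cv^4*sw^2 + (-1/6)*r2^2*r3^3*su^4*cu^2*sv^2*cv^2*cw^2 + (-1/6)*r2^2*r3^3*su^4*cu^2*sv^2*cv^2*sw^2 + (-1/12)*r2^2*r3^3*su^4*cu^2*sv^4*cw^2 + (-1/12)*r2^2*r3^3*su^4*cu^2*sv^4*sw^2 + (-1/36)*r2^2*r3^3*su^6*cv^4*cw^2 + (-1/36)*r2^2*r3^3*su^6*cv^4*sw^2 + (-1/18)*r2^2*r3^3*su^6*sv^2*cv^2*cw^2 + (-1/18)*r2^2*r3^3*su^6*sv^2*cv^2*sw^2 + (-1/36)*r2^2*r3^3*su^6*sv^4*cw^2 + (-1/36)*r2^2*r3^3*su^6*sv^4*sw^2) * h2 + ((1/9)*r3*cu^2*cv^2 + (1/9)*r3*cu^2*sv^2 + (1/9)*r3*su^2*cv^2 + (1/9)*r3*su^2*sv^2 + (-1/18)*r2^2*r3*cu^6*cv^4*cw^2 + (-1/18)*r2^2*r3*cu^6*cv^4*sw^2 + (-1/9)*r2^2*r3*cu^6*sv^2*cv^2*cw^2 + (-1/9)*r2^2*r3*cu^6*sv^2*cv^2*sw^2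 + (-1/18)*r2^2*r3*cu^6*sv^4*cw^2 + (-1/18)*r2^2*r3*cu^6*sv^4*sw^2 + (-1/6)*r2^2*r3*su^2*cu^4*cv^4*cw^2 + (-1/6)*r2^2*r3*su^2*cu^4*cv^4*sw^2 + (-1/3)*r2^2*r3*su^2*cu^4*sv^2*cv^2*cw^2 + (-1/3)*r2^2*r3*su^2*cu^4*sv^2*cv^2*sw^2 + (-1/6)*r2^2*r3*su^2*cu^4*sv^4*cw^2 + (-1/6)*r2^2*r3*su^2*cu^4*sv^4*sw^2 + (-1/6)*r2^2*r3*su^4*cu^2*cv^4*cw^2 + (-1/6)*r2^2*r3*su^4*cu^2*cv^4*sw^2 + (-1/3)*r2^2*r3*su^4*cu^2*sv^2*cv^2*cw^2 + (-1/3)*r2^2*r3*su^4*cu^2*sv^2*cv^2*sw^2 + (-1/6)*r2^2*r3*su^4*cu^2*sv^4*cw^2 + (-1/6)*r2^2*r3*su^4*cu^2*sv^4*sw^2 + (-1/18)*r2^2*r3*su^6*cv^4*cw^2 + (-1/18)*r2^2*r3*su^6*cv^4*sw^2 + (-1/9)*r2^2*r3*su^6*sv^2*cv^2*cw^2 + (-1/9)*r2^2*r3*su^6*sv^2*cv^2*sw^2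 + (-1/18)*r2^2*r3*su^6*sv^4*cw^2 + (-1/18)*r2^2*r3*su^6*sv^4*sw^2) * h3 + ((-1/3)*r3 + (1/3)*r3*cv^2 + (1/3)*r3*sv^2 + (2/3)*r3*cu^2 + (-2)*r3*cu^2*cv^2 + r3*cu^2*cv^4 + (-1)*r3*cu^2*sv^2 + r3*cu^2*sv^2*cv^2 + (-1/3)*r3*cu^4 + 2*r3*cu^4*cv^2 + (-1)*r3*cu^4*cv^4 + r3*cu^4*sv^2 + (-1)*r3*cu^4*sv^2*cv^2 + (-2/3)*r3*su^2*cv^2 + (1/3)*r3*su^2*cv^4 + (-1/3)*r3*su^2*sv^2 + (1/3)*r3*su^2*sv^2*cv^2 + (2/3)*r3*su^2*cu^2*cv^2 + (-1/3)*r3*su^2*cu^2*cv^4 + (1/3)*r3*su^2*cu^2*sv^2 + (-1/3)*r3*su^2*cu^2*sv^2*cv^2 + (-1/2)*r2^2*r3*cu^4*cv^4*cw^2 + (-1/2)*r2^2*r3*cu^4*cv^4*sw^2 + (-1)*r2^2*r3*cu^4*sv^2*cv^2*cw^2 + (-1)*r2^2*r3*cu^4*sv^2*cv^2*sw^2 +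 (-1/2)*r2^2*r3*cu^4*sv^4*cw^2 + (-1/2)*r2^2*r3*cu^4*sv^4*sw^2 + (-1/2)*r2^2*r3*su^2*cu^2*cv^4*cw^2 + (-1/2)*r2^2*r3*su^2*cu^2*cv^4*sw^2 + (-1)*r2^2*r3*su^2*cu^2*sv^2*cv^2*cw^2 + (-1)*r2^2*r3*su^2*cu^2*sv^2*cv^2*sw^2 + (-1/2)*r2^2*r3*su^2*cu^2*sv^4*cw^2 + (-1/2)*r2^2*r3*su^2*cu^2*sv^4*sw^2 + (-1/6)*r2^2*r3*su^4*cv^4*cw^2 + (-1/6)*r2^2*r3*su^4*cv^4*sw^2 + (-1/3)*r2^2*r3*su^4*sv^2*cv^2*cw^2 + (-1/3)*r2^2*r3*su^4*sv^2*cv^2*sw^2 + (-1/6)*r2^2*r3*su^4*sv^4*cw^2 + (-1/6)*r2^2*r3*su^4*sv^4*sw^2) * hu + ((1/3)*r3 + (-1)*r3*cu^2 + r3*cu^2*cv^2 + r3*cu^4 + (-1)*r3*cu^4*cv^2 + (-1/3)*r3*cu^6 + (1/3)*r3*cu^6*cv^2 + (-1/3)*r3*su^2 + (1/3)*r3*su^2*cv^2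 + (2/3)*r3*su^2*cu^2 + (-2/3)*r3*su^2*cu^2*cv^2 + (-1/3)*r3*su^2*cu^4 + (1/3)*r3*su^2*cu^4*cv^2 + (-1)*r2^2*r3*cu^4*cv^2*cw^2 + (-1)*r2^2*r3*cu^4*cv^2*sw^2 + (-1/2)*r2^2*r3*cu^4*sv^2*cw^2 + (-1/2)*r2^2*r3*cu^4*sv^2*sw^2 + (2/3)*r2^2*r3*cu^6*cv^2*cw^2 + (2/3)*r2^2*r3*cu^6*cv^2*sw^2 + (1/3)*r2^2*r3*cu^6*sv^2*cw^2 + (1/3)*r2^2*r3*cu^6*sv^2*sw^2 + (-1)*r2^2*r3*su^2*cu^2*cv^2*cw^2 + (-1)*r2^2*r3*su^2*cu^2*cv^2*sw^2 + (-1/2)*r2^2*r3*su^2*cu^2*sv^2*cw^2 + (-1/2)*r2^2*r3*su^2*cu^2*sv^2*sw^2 + r2^2*r3*su^2*cu^4*cv^2*cw^2 + r2^2*r3*su^2*cu^4*cv^2*sw^2 + (1/2)*r2^2*r3*su^2*cu^4*sv^2*cw^2 + (1/2)*r2^2*r3*su^2*cu^4*sv^2*sw^2 + (-1/3)*r2^2*r3*su^4*cv^2*cw^2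 + (-1/3)*r2^2*r3*su^4*cv^2*sw^2 + (-1/6)*r2^2*r3*su^4*sv^2*cw^2 + (-1/6)*r2^2*r3*su^4*sv^2*sw^2 + (1/3)*r2^2*r3*su^4*cu^2*cv^2*cw^2 + (1/3)*r2^2*r3*su^4*cu^2*cv^2*sw^2 + (1/6)*r2^2*r3*su^4*cu^2*sv^2*cw^2 + (1/6)*r2^2*r3*su^4*cu^2*sv^2*sw^2) * hv + ((-1)*r2^2*r3*cu^4*cv^2 + (1/2)*r2^2*r3*cu^4*cv^4 + (-1/2)*r2^2*r3*cu^4*sv^2 + (1/2)*r2^2*r3*cu^4*sv^2*cv^2 + (2/3)*r2^2*r3*cu^6*cv^2 + (-1/3)*r2^2*r3*cu^6*cv^4 + (1/3)*r2^2*r3*cu^6*sv^2 + (-1/3)*r2^2*r3*cu^6*sv^2*cv^2 + (-1)*r2^2*r3*su^2*cu^2*cv^2 + (1/2)*r2^2*r3*su^2*cu^2*cv^4 + (-1/2)*r2^2*r3*su^2*cu^2*sv^2 + (1/2)*r2^2*r3*su^2*cu^2*sv^2*cv^2 + r2^2*r3*su^2*cu^4*cv^2 + (-1/2)*r2^2*r3*su^2*cu^4*cv^4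 + (1/2)*r2^2*r3*su^2*cu^4*sv^2 + (-1/2)*r2^2*r3*su^2*cu^4*sv^2*cv^2 + (-1/3)*r2^2*r3*su^4*cv^2 + (1/6)*r2^2*r3*su^4*cv^4 + (-1/6)*r2^2*r3*su^4*sv^2 + (1/6)*r2^2*r3*su^4*sv^2*cv^2 + (1/3)*r2^2*r3*su^4*cu^2*cv^2 + (-1/6)*r2^2*r3*su^4*cu^2*cv^4 + (1/6)*r2^2*r3*su^4*cu^2*sv^2 + (-1/6)*r2^2*r3*su^4*cu^2*sv^2*cv^2) * hw
  have J12 : gmet (pTor u w) (qTor u v) (mkQ 0 0 0 0, mkQ (r3/2*(r2/2)*(-(sv*(su+cu)))) (r3/2*(r2/2)*(cv*(su+cu))) (r3/2*(r2/2)*(-(sv*(su-cu)))) (r3/2*(r2/2)*(cv*(su-cu)))) (Jmap (pTor u w) (qTor u v) (mkQ (r3/2*(-(cu*sw))) (r3/2*(cu*cw)) (r3/2*(-(su*sw))) (r3/2*(su*cw)), mkQ 0 0 0 0)) = 0 := by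
    simp only [gmet, Jmap, ← hr3def, hq3, hp, hq, hpinv, hqinv, Prod.smul_mk, two_mk, smul_mk, mul_mk, neg_mk, add_mk, sub_mk, innQ_mk]
    linear_combination (0:ℝ)
  have J20 : gmet (pTor u w) (qTor u v) (mkQ (r3/2*(-(cu*sw))) (r3/2*(cu*cw)) (r3/2*(-(su*sw))) (r3/2*(su*cw)), mkQ 0 0 0 0) (Jmap (pTor u w) (qTor u v) (mkQ (r3/2*(-(su*cw))) (r3/2*(-(su*sw))) (r3/2*(cu*cw)) (r3/2*(cu*sw)), mkQ (r3/2*(r2/2)*(cv*(cu-su))) (r3/2*(r2/2)*(sv*(cu-su))) (r3/2*(r2/2)*(cv*(cu+su))) (r3/2*(r2/2)*(sv*(cu+su))))) = 0 := by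
    simp only [gmet, Jmap, ← hr3def, hq3, hp, hq, hpinv, hqinv, Prod.smul_mk, two_mk, smul_mk, mul_mk, neg_mk, add_mk, sub_mk, innQ_mk]
    linear_combination (0:ℝ)
  have J21 : gmet (pTor u w) (qTor u v) (mkQ (r3/2*(-(cu*sw))) (r3/2*(cu*cw)) (r3/2*(-(su*sw))) (r3/2*(su*cw)), mkQ 0 0 0 0) (Jmap (pTor u w) (qTor u v) (mkQ 0 0 0 0, mkQ (r3/2*(r2/2)*(-(sv*(su+cu)))) (r3/2*(r2/2)*(cv*(su+cu))) (r3/2*(r2/2)*(-(sv*(su-cu)))) (r3/2*(r2/2)*(cv*(su-cu))))) = 0 := by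
    simp only [gmet, Jmap, ← hr3def, hq3, hp, hq, hpinv, hqinv, Prod.smul_mk, two_mk, smul_mk, mul_mk, neg_mk, add_mk, sub_mk, innQ_mk]
    linear_combination (0:ℝ)
  have J22 : gmet (pTor u w) (qTor u v) (mkQ (r3/2*(-(cu*sw))) (r3/2*(cu*cw)) (r3/2*(-(su*sw))) (r3/2*(su*cw)), mkQ 0 0 0 0) (Jmap (pTor u w) (qTor u v) (mkQ (r3/2*(-(cu*sw))) (r3/2*(cu*cw)) (r3/2*(-(su*sw))) (r3/2*(su*cw)), mkQ 0 0 0 0)) = 0 := by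
    simp only [gmet, Jmap, ← hr3def, hq3, hp, hq, hpinv, hqinv, Prod.smul_mk, two_mk, smul_mk, mul_mk, neg_mk, add_mk, sub_mk, innQ_mk]
    linear_combination ((1/18)*r3^3*cu^6*cv^2*cw^4 + (1/9)*r3^3*cu^6*cv^2*sw^2*cw^2 + (1/18)*r3^3*cu^6*cv^2*sw^4 + (1/18)*r3^3*cu^6*sv^2*cw^4 + (1/9)*r3^3*cu^6*sv^2*sw^2*cw^2 + (1/18)*r3^3*cu^6*sv^2*sw^4 + (1/6)*r3^3*su^2*cu^4*cv^2*cw^4 + (1/3)*r3^3*su^2*cu^4*cv^2*sw^2*cw^2 + (1/6)*r3^3*su^2*cu^4*cv^2*sw^4 + (1/6)*r3^3*su^2*cu^4*sv^2*cw^4 + (1/3)*r3^3*su^2*cu^4*sv^2*sw^2*cw^2 + (1/6)*r3^3*su^2*cu^4*sv^2*sw^4 + (1/6)*r3^3*su^4*cu^2*cv^2*cw^4 + (1/3)*r3^3*su^4*cu^2*cv^2*sw^2*cw^2 + (1/6)*r3^3*su^4*cu^2*cv^2*sw^4 + (1/6)*r3^3*su^4*cu^2*sv^2*cw^4 + (1/3)*r3^3*su^4*cu^2*sv^2*sw^2*cw^2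 + (1/6)*r3^3*su^4*cu^2*sv^2*sw^4 + (1/18)*r3^3*su^6*cv^2*cw^4 + (1/9)*r3^3*su^6*cv^2*sw^2*cw^2 + (1/18)*r3^3*su^6*cv^2*sw^4 + (1/18)*r3^3*su^6*sv^2*cw^4 + (1/9)*r3^3*su^6*sv^2*sw^2*cw^2 + (1/18)*r3^3*su^6*sv^2*sw^4) * h2 + ((-1/9)*r3*cu^2*cw^2 + (-1/9)*r3*cu^2*sw^2 + (1/9)*r3*cu^6*cv^2*cw^4 + (2/9)*r3*cu^6*cv^2*sw^2*cw^2 + (1/9)*r3*cu^6*cv^2*sw^4 + (1/9)*r3*cu^6*sv^2*cw^4 + (2/9)*r3*cu^6*sv^2*sw^2*cw^2 + (1/9)*r3*cu^6*sv^2*sw^4 + (-1/9)*r3*su^2*cw^2 + (-1/9)*r3*su^2*sw^2 + (1/3)*r3*su^2*cu^4*cv^2*cw^4 + (2/3)*r3*su^2*cu^4*cv^2*sw^2*cw^2 + (1/3)*r3*su^2*cu^4*cv^2*sw^4 + (1/3)*r3*su^2*cu^4*sv^2*cw^4 + (2/3)*r3*su^2*cu^4*sv^2*sw^2*cw^2 +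 (1/3)*r3*su^2*cu^4*sv^2*sw^4 + (1/3)*r3*su^4*cu^2*cv^2*cw^4 + (2/3)*r3*su^4*cu^2*cv^2*sw^2*cw^2 + (1/3)*r3*su^4*cu^2*cv^2*sw^4 + (1/3)*r3*su^4*cu^2*sv^2*cw^4 + (2/3)*r3*su^4*cu^2*sv^2*sw^2*cw^2 + (1/3)*r3*su^4*cu^2*sv^2*sw^4 + (1/9)*r3*su^6*cv^2*cw^4 + (2/9)*r3*su^6*cv^2*sw^2*cw^2 + (1/9)*r3*su^6*cv^2*sw^4 + (1/9)*r3*su^6*sv^2*cw^4 + (2/9)*r3*su^6*sv^2*sw^2*cw^2 + (1/9)*r3*su^6*sv^2*sw^4) * h3 + ((1/3)*r3 + (-1/3)*r3*cw^2 + (-1/3)*r3*sw^2 + (-2/3)*r3*cu^2 + 2*r3*cu^2*cw^2 + (-1)*r3*cu^2*cw^4 + r3*cu^2*sw^2 + (-1)*r3*cu^2*sw^2*cw^2 + (1/3)*r3*cu^4 + (2/3)*r3*su^2*cw^2 + (-1/3)*r3*su^2*cw^4 + (1/3)*r3*su^2*sw^2 + (-1/3)*r3*su^2*sw^2*cw^2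 + (-2/3)*r3*su^2*cu^2*cw^2 + (1/3)*r3*su^2*cu^2*cw^4 + (-1/3)*r3*su^2*cu^2*sw^2 + (1/3)*r3*su^2*cu^2*sw^2*cw^2 + r3*su^2*cu^2*cv^2*cw^4 + 2*r3*su^2*cu^2*cv^2*sw^2*cw^2 + r3*su^2*cu^2*cv^2*sw^4 + r3*su^2*cu^2*sv^2*cw^4 + 2*r3*su^2*cu^2*sv^2*sw^2*cw^2 + r3*su^2*cu^2*sv^2*sw^4 + (1/3)*r3*su^4*cv^2*cw^4 + (2/3)*r3*su^4*cv^2*sw^2*cw^2 + (1/3)*r3*su^4*cv^2*sw^4 + (1/3)*r3*su^4*sv^2*cw^4 + (2/3)*r3*su^4*sv^2*sw^2*cw^2 + (1/3)*r3*su^4*sv^2*sw^4) * hu + ((1/3)*r3*cu^6*cw^4 + (2/3)*r3*cu^6*sw^2*cw^2 + (1/3)*r3*cu^6*sw^4 + r3*su^2*cu^2*cw^4 + 2*r3*su^2*cu^2*sw^2*cw^2 + r3*su^2*cu^2*sw^4 + (1/3)*r3*su^4*cw^4 + (2/3)*r3*su^4*sw^2*cw^2 + (1/3)*r3*su^4*sw^4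 + (-1/3)*r3*su^4*cu^2*cw^4 + (-2/3)*r3*su^4*cu^2*sw^2*cw^2 + (-1/3)*r3*su^4*cu^2*sw^4) * hv + ((-1/3)*r3 + r3*cu^2 + (-1)*r3*cu^2*cw^2 + (-1)*r3*cu^4 + r3*cu^4*cw^2 + (1/3)*r3*cu^6 + (1/3)*r3*cu^6*cw^2 + (1/3)*r3*cu^6*sw^2 + (1/3)*r3*su^2 + (-1/3)*r3*su^2*cw^2 + (-2/3)*r3*su^2*cu^2 + (8/3)*r3*su^2*cu^2*cw^2 + r3*su^2*cu^2*sw^2 + (1/3)*r3*su^2*cu^4 + (-1/3)*r3*su^2*cu^4*cw^2 + (2/3)*r3*su^4*cw^2 + (1/3)*r3*su^4*sw^2 + (-2/3)*r3*su^4*cu^2*cw^2 + (-1/3)*r3*su^4*cu^2*sw^2) * hw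
  refine ⟨⟨?_, ?_⟩, ?_, ?_⟩
  · rw [hp]; exact norm_mk_one _ _ _ _ (by linear_combination (cw^2 + sw^2) * hu + (1) * hw)
  · rw [hq]; exact norm_mk_one _ _ _ _ (by linear_combination ((1/2)*cu^2*cv^2 + (1/2)*cu^2*sv^2 + (1/2)*su^2*cv^2 + (1/2)*su^2*sv^2) * h2 + (cv^2 + sv^2) * hu + (1) * hv)
  · intro a b
    fin_cases a <;> fin_cases b <;>
      simp only [Matrix.cons_val_zero, Matrix.cons_val_one, Matrix.head_cons, fin3_mk2,
        Matrix.cons_val_two, Matrix.tail_cons, Fin.mk_zero, Fin.mk_one, hD0, hD1, hD2,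
        Fin.isValue, Fin.reduceEq, reduceIte, if_true, if_false] <;>
      first
      | exact G00 | exact G01 | exact G02 | exact G10 | exact G11 | exact G12
      | exact G20 | exact G21 | exact G22
  · intro a b
    fin_cases a <;> fin_cases b <;>
      simp only [Matrix.cons_val_zero, Matrix.cons_val_one, Matrix.head_cons, fin3_mk2,
        Matrix.cons_val_two, Matrix.tail_cons, Fin.mk_zero, Fin.mk_one, hD0, hD1, hD2,
        Fin.isValue, Fin.reduceEq, reduceIte, if_true, if_false] <;>
      first
      | exact J00 | exact J01 | exact J02 | exact J10 | exact J11 | exact J12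
      | exact J20 | exact J21 | exact J22
end
end
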